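/- arXiv:math/0112006 — 3 statements merged into one kernel-verified Lean document; each statement's English description precedes it below -/
import Mathlib

section
/- Let G be a group (with the discrete topology) acting continuously and properly discontinuously on a locally compact Hausdorff space X, and acting continuously on a topological space E. Let G act diagonally on X × E, and let p : (X × E)/G → X/G be the continuous map induced by the projection X × E → X. Then for every x ∈ X, the fiber p⁻¹([x]), with the subspace topology from (X × E)/G, is homeomorphic to the orbit space E/G_x, where the stabilizer G_x acts on E by restriction of the G-action. -/
/-!
For a properly discontinuous action of a discrete group `G` on a locally compact
Hausdorff space `X` and any continuous `G`-action on `E`, the fiber of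
`p : (X × E)/G → X/G` over the orbit `[x]` is homeomorphic to `E/Gₓ`,
where `Gₓ` is the stabilizer of `x`.
-/

open Pointwise

universe u

lemma aux_isOpenMap_quotient {G : Type u} [Group G] {A : Type u} [TopologicalSpace A]
    [MulAction G A] (h : ∀ g : G, Continuous fun a : A => g • a) :
    IsOpenMap (Quotient.mk (MulAction.orbitRel G A)) := by
  intro s hs
  rw [isOpen_coinduced]
  show IsOpen (Quotient.mk (MulAction.orbitRel G A) ⁻¹' (Quotient.mk _ '' s))
  have key : Quotient.mk (MulAction.orbitRel G A) ⁻¹' (Quotient.mk _ '' s)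
      = ⋃ g : G, (fun a => g • a) '' s := by
    ext z
    simp only [Set.mem_preimage, Set.mem_image, Set.mem_iUnion]
    constructor
    · rintro ⟨w, hw, hzw⟩
      obtain ⟨g, hg⟩ := MulAction.orbitRel_apply.mp (Quotient.eq.mp hzw.symm)
      exact ⟨g, w, hw, hg⟩
    · rintro ⟨g, w, hw, rfl⟩
      exact ⟨w, hw, Quotient.sound (MulAction.orbitRel_apply.mpr ⟨g⁻¹, by simp⟩)⟩
  rw [key]
  refine isOpen_iUnion fun g => ?_
  have himg : (fun a => g • a) '' s = (fun a => g⁻¹ • a) ⁻¹' s := by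
    ext z; simp only [Set.mem_image, Set.mem_preimage]
    constructor
    · rintro ⟨w, hw, rfl⟩; simpa using hw
    · intro hz; exact ⟨g⁻¹ • z, hz, by simp⟩
  rw [himg]
  exact (h g⁻¹).isOpen_preimage s hs

theorem fiber_of_borel_projection_homeomorphic_orbit_space
    {G : Type u} [Group G] {X E : Type u} [TopologicalSpace X] [TopologicalSpace E]
    [MulAction G X] [MulAction G E]
    -- the (discrete) group `G` acts continuously on `X` and `E`
    (hX : ∀ g : G, Continuous fun a : X => g • a)
    (hE : ∀ g : G, Continuous fun e : E => g • e)
    -- `X` is locally compact Hausdorff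
    [LocallyCompactSpace X] [T2Space X]
    -- the action of `G` on `X` is properly discontinuous
    (hpd : ∀ K L : Set X, IsCompact K → IsCompact L →
      {g : G | (g • K) ∩ L ≠ ∅}.Finite)
    -- `p : (X × E)/G → X/G` is induced by the projection `X × E → X`
    (p : Quotient (MulAction.orbitRel G (X × E)) → Quotient (MulAction.orbitRel G X))
    (hp : Continuous p)
    (hp' : ∀ z : X × E, p (Quotient.mk _ z) = Quotient.mk _ z.1)
    (x : X) :
    Nonempty ((p ⁻¹' {Quotient.mk _ x} : Set (Quotient (MulAction.orbitRel G (X × E))))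
      ≃ₜ Quotient (MulAction.orbitRel (MulAction.stabilizer G x) E)) := by
  classical
  -- Step 1: a good neighborhood `U` of `x`
  obtain ⟨K, hKc, hKn⟩ := exists_compact_mem_nhds x
  have hxK : x ∈ interior K := mem_interior_iff_mem_nhds.2 hKn
  have hFfin : {g : G | (g • K) ∩ K ≠ ∅}.Finite := hpd K K hKc hKc
  have hsep : ∀ g : G, ∃ u : Set X, IsOpen u ∧ x ∈ u ∧ (g • x ≠ x → (g • u) ∩ u = ∅) := by
    intro g
    by_cases hg : g • x = x
    · exact ⟨Set.univ, isOpen_univ, trivial, fun h => absurd hg h⟩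
    · obtain ⟨a, b, ha, hb, hga, hxb, hab⟩ := t2_separation hg
      refine ⟨b ∩ (fun z => g • z) ⁻¹' a, hb.inter ((hX g).isOpen_preimage a ha),
        ⟨hxb, hga⟩, fun _ => ?_⟩
      rw [Set.eq_empty_iff_forall_notMem]
      rintro y ⟨hy1, hy2⟩
      obtain ⟨w, ⟨-, hwa⟩, rfl⟩ := hy1
      exact Set.disjoint_left.mp hab hwa hy2.1
  choose W hWopen hWmem hWkey using hsep
  set U : Set X := interior K ∩ ⋂ g ∈ hFfin.toFinset, W g with hU
  have hUopen : IsOpen U := isOpen_interior.inter (isOpen_biInter_finset fun g _ => hWopen g)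
  have hxU : x ∈ U := ⟨hxK, Set.mem_iInter₂.mpr fun g _ => hWmem g⟩
  have hUsub : U ⊆ K := fun y hy => interior_subset hy.1
  have hUkey : ∀ g : G, ((g • U) ∩ U).Nonempty → g • x = x := by
    intro g hne
    obtain ⟨y, hy1, hy2⟩ := hne
    obtain ⟨w, hwU, rfl⟩ := hy1
    have hgF : g ∈ hFfin.toFinset := by
      rw [Set.Finite.mem_toFinset]
      exact Set.nonempty_iff_ne_empty.mp ⟨g • w, Set.smul_mem_smul_set (hUsub hwU), hUsub hy2⟩
    by_contra hgx
    have hdisj := hWkey g hgx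
    have : g • w ∈ (g • W g) ∩ W g :=
      ⟨Set.smul_mem_smul_set (Set.mem_iInter₂.mp hwU.2 g hgF),
        Set.mem_iInter₂.mp hy2.2 g hgF⟩
    rw [hdisj] at this
    exact this
  -- Step 2: the map `E → fiber`
  set fib : Set (Quotient (MulAction.orbitRel G (X × E))) := p ⁻¹' {Quotient.mk _ x} with hfib
  have hmem : ∀ e : E, Quotient.mk (MulAction.orbitRel G (X × E)) (x, e) ∈ fib := by
    intro e
    simp only [hfib, Set.mem_preimage, Set.mem_singleton_iff]
    exact hp' (x, e)
  set toFib : E → fib := fun e => ⟨Quotient.mk _ (x, e), hmem e⟩ with htoFib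
  have hresp : ∀ a b : E, MulAction.orbitRel (MulAction.stabilizer G x) E a b →
      toFib a = toFib b := by
    intro a b hab
    obtain ⟨s, hs⟩ := MulAction.orbitRel_apply.mp hab
    apply Subtype.ext
    refine Quotient.sound (MulAction.orbitRel_apply.mpr ⟨(s : G), ?_⟩)
    have hsx : (s : G) • x = x := s.2
    have hsb : (s : G) • b = a := hs
    exact Prod.ext hsx hsb
  set F : Quotient (MulAction.orbitRel (MulAction.stabilizer G x) E) → fib :=
    Quotient.lift toFib hresp with hFdef
  -- bijectivity
  have hinj : Function.Injective F := by
    intro c d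
    induction c using Quotient.ind with | _ a =>
    induction d using Quotient.ind with | _ b =>
    intro hcd
    have h1 : Quotient.mk (MulAction.orbitRel G (X × E)) (x, a) = Quotient.mk _ (x, b) :=
      congrArg Subtype.val hcd
    obtain ⟨g, hg⟩ := MulAction.orbitRel_apply.mp (Quotient.eq.mp h1)
    have hgx : g • x = x := congrArg Prod.fst hg
    have hgb : g • b = a := congrArg Prod.snd hg
    exact Quotient.sound (MulAction.orbitRel_apply.mpr
      ⟨⟨g, MulAction.mem_stabilizer_iff.mpr hgx⟩, hgb⟩)
  have hsurj : Function.Surjective F := by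
    rintro ⟨z, hz⟩
    induction z using Quotient.ind with | _ w =>
    have hx1 : Quotient.mk (MulAction.orbitRel G X) w.1 = Quotient.mk _ x := by
      rw [← hp' w]; exact hz
    obtain ⟨g, hg⟩ := MulAction.orbitRel_apply.mp (Quotient.eq.mp hx1)
    refine ⟨Quotient.mk _ (g⁻¹ • w.2), Subtype.ext ?_⟩
    refine Quotient.sound (MulAction.orbitRel_apply.mpr ⟨g⁻¹, ?_⟩)
    exact Prod.ext (by simp [← hg]) rfl
  -- continuity
  have hcont : Continuous F := by
    apply Continuous.quotient_lift
    apply Continuous.subtype_mk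
    exact continuous_quotient_mk'.comp (Continuous.prodMk_right x)
  -- openness
  have hprod : ∀ g : G, Continuous fun z : X × E => g • z := fun g =>
    ((hX g).comp continuous_fst).prodMk ((hE g).comp continuous_snd)
  have hq_open : IsOpenMap (Quotient.mk (MulAction.orbitRel G (X × E))) :=
    aux_isOpenMap_quotient hprod
  have hopen : IsOpenMap F := by
    intro O hO
    set V : Set E := Quotient.mk _ ⁻¹' O with hVdef
    have hVopen : IsOpen V := hO.preimage continuous_quotient_mk'
    have hSopen : IsOpen (Quotient.mk (MulAction.orbitRel G (X × E)) '' (U ×ˢ V)) :=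
      hq_open _ (hUopen.prod hVopen)
    have himg : F '' O = Subtype.val ⁻¹'
        (Quotient.mk (MulAction.orbitRel G (X × E)) '' (U ×ˢ V)) := by
      ext z
      constructor
      · rintro ⟨c, hc, rfl⟩
        induction c using Quotient.ind with | _ e =>
        exact ⟨(x, e), ⟨hxU, hc⟩, rfl⟩
      · rintro ⟨w, ⟨hw1, hw2⟩, hwz⟩
        have hx1 : Quotient.mk (MulAction.orbitRel G X) w.1 = Quotient.mk _ x := by
          rw [← hp' w, hwz]; exact z.2
        obtain ⟨g, hg⟩ := MulAction.orbitRel_apply.mp (Quotient.eq.mp hx1)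
        have hgx : g • x = x := hUkey g ⟨w.1, by rw [← hg]; exact Set.smul_mem_smul_set hxU, hw1⟩
        have hw1x : w.1 = x := by rw [← hg]; exact hgx
        refine ⟨Quotient.mk _ w.2, hw2, ?_⟩
        apply Subtype.ext
        show Quotient.mk (MulAction.orbitRel G (X × E)) (x, w.2) = z.val
        rw [← hwz]
        congr 1
        exact Prod.ext hw1x.symm rfl
      
    rw [himg]
    exact hSopen.preimage continuous_subtype_val
  exact ⟨(Equiv.toHomeomorphOfContinuousOpen
    (Equiv.ofBijective F ⟨hinj, hsurj⟩) hcont hopen).symm⟩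
end

section
/- Let G be a group (with the discrete topology) acting continuously on topological spaces X and E, let x ∈ X, and let Ū ⊆ X be an open set containing x such that g•Ū = Ū for every g in the stabilizer G_x, and (g•Ū) ∩ Ū = ∅ for every g ∉ G_x. Equip Ū × E with the diagonal G_x-action and (G•Ū) × E with the diagonal G-action (where G•Ū = ⋃_{g∈G} g•Ū). Then the inclusion Ū × E ↪ (G•Ū) × E induces a homeomorphism of orbit spaces (Ū × E)/G_x ≅ ((G•Ū) × E)/G. -/
/-!
If `Ū ∋ x` is open, invariant under the stabilizer `Gₓ`, and disjoint from its
translates by elements outside `Gₓ`, then the inclusion `Ū × E ↪ (G•Ū) × E`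
induces a homeomorphism of orbit spaces `(Ū × E)/Gₓ ≃ ((G•Ū) × E)/G`
(diagonal actions).
-/

open Pointwise

universe u

theorem orbit_space_of_slice_homeomorphic
    {G : Type u} [Group G] {X E : Type u} [TopologicalSpace X] [TopologicalSpace E]
    [MulAction G X] [MulAction G E]
    -- the group `G` acts by homeomorphisms on `X` and `E`
    (hX : ∀ g : G, Continuous fun a : X => g • a)
    (hE : ∀ g : G, Continuous fun e : E => g • e)
    (x : X) (U : Set X) (hUopen : IsOpen U) (hxU : x ∈ U)
    -- `Ū` is invariant under the stabilizer of `x`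
    (hinv : ∀ g ∈ MulAction.stabilizer G x, g • U = U)
    -- `Ū` is disjoint from its translates by elements outside the stabilizer
    (hdisj : ∀ g ∉ MulAction.stabilizer G x, (g • U) ∩ U = ∅) :
    -- the orbit space `(Ū × E)/Gₓ` is homeomorphic to `((G•Ū) × E)/G`,
    -- via the map induced by the inclusion `Ū × E ↪ (G•Ū) × E`
    ∃ φ : Quot (fun a b : ↥U × E => ∃ g ∈ MulAction.stabilizer G x,
          g • (a.1 : X) = (b.1 : X) ∧ g • a.2 = b.2) ≃ₜ
        Quot (fun a b : ↥(⋃ g : G, g • U) × E => ∃ g : G,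
          g • (a.1 : X) = (b.1 : X) ∧ g • a.2 = b.2),
      ∀ a : ↥U × E,
        φ (Quot.mk _ a) =
          Quot.mk _ (⟨(a.1 : X), Set.mem_iUnion.mpr ⟨1, by rw [one_smul]; exact a.1.2⟩⟩,
            a.2) := by
  classical
  haveI : ContinuousConstSMul G X := ⟨hX⟩
  haveI : ContinuousConstSMul G E := ⟨hE⟩
  set W : Set X := ⋃ g : G, g • U with hWdef
  set r₁ : ↥U × E → ↥U × E → Prop := fun a b => ∃ g ∈ MulAction.stabilizer G x,
      g • (a.1 : X) = (b.1 : X) ∧ g • a.2 = b.2 with hr₁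
  set r₂ : ↥W × E → ↥W × E → Prop := fun a b => ∃ g : G,
      g • (a.1 : X) = (b.1 : X) ∧ g • a.2 = b.2 with hr₂
  have memW : ∀ {y : X}, y ∈ U → y ∈ W := fun hy =>
    Set.mem_iUnion.mpr ⟨1, by rw [one_smul]; exact hy⟩
  -- if `g` maps a point of `U` into `U`, then `g` is in the stabilizer
  have hstab : ∀ {g : G} {u : X}, u ∈ U → g • u ∈ U → g ∈ MulAction.stabilizer G x := by
    intro g u hu hgu
    by_contra hg
    have h1 : g • u ∈ (g • U) ∩ U := ⟨Set.smul_mem_smul_set hu, hgu⟩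
    rw [hdisj g hg] at h1
    exact h1
  -- the forward map
  let φ0 : ↥U × E → Quot r₂ := fun a =>
    Quot.mk r₂ (⟨(a.1 : X), memW a.1.2⟩, a.2)
  have hφ0 : ∀ a b, r₁ a b → φ0 a = φ0 b := by
    rintro a b ⟨g, hg, h1, h2⟩
    exact Quot.sound ⟨g, h1, h2⟩
  let φ : Quot r₁ → Quot r₂ := Quot.lift φ0 hφ0
  -- the backward map
  let ψ0 : ↥W × E → Quot r₁ := fun b =>
    Quot.mk r₁ (⟨(Classical.choose (Set.mem_iUnion.mp b.1.2))⁻¹ • (b.1 : X),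
      Set.mem_smul_set_iff_inv_smul_mem.mp
        (Classical.choose_spec (Set.mem_iUnion.mp b.1.2))⟩,
      (Classical.choose (Set.mem_iUnion.mp b.1.2))⁻¹ • b.2)
  have kψ : ∀ (b : ↥W × E) (g : G) (hg : (b.1 : X) ∈ g • U),
      ψ0 b = Quot.mk r₁ (⟨g⁻¹ • (b.1 : X),
        Set.mem_smul_set_iff_inv_smul_mem.mp hg⟩, g⁻¹ • b.2) := by
    intro b g hg
    set g' := Classical.choose (Set.mem_iUnion.mp b.1.2) with hg'def
    have hspec : (b.1 : X) ∈ g' • U := Classical.choose_spec (Set.mem_iUnion.mp b.1.2)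
    have hu' : g'⁻¹ • (b.1 : X) ∈ U := Set.mem_smul_set_iff_inv_smul_mem.mp hspec
    have hu : g⁻¹ • (b.1 : X) ∈ U := Set.mem_smul_set_iff_inv_smul_mem.mp hg
    have hmul : (g⁻¹ * g') • (g'⁻¹ • (b.1 : X)) = g⁻¹ • (b.1 : X) := by
      rw [smul_smul, mul_assoc, mul_inv_cancel, mul_one]
    refine Quot.sound ⟨g⁻¹ * g', hstab hu' (hmul ▸ hu), hmul, ?_⟩
    rw [smul_smul, mul_assoc, mul_inv_cancel, mul_one]
  have hψ0 : ∀ a b, r₂ a b → ψ0 a = ψ0 b := by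
    rintro a b ⟨g, h1, h2⟩
    obtain ⟨g', hg'⟩ := Set.mem_iUnion.mp a.1.2
    have hb : (b.1 : X) ∈ (g * g') • U := by
      rw [← h1, mul_smul]
      exact Set.smul_mem_smul_set hg'
    rw [kψ a g' hg', kψ b (g * g') hb]
    have e1 : (g * g')⁻¹ • (b.1 : X) = g'⁻¹ • (a.1 : X) := by
      rw [← h1, mul_inv_rev, mul_smul, inv_smul_smul]
    have e2 : (g * g')⁻¹ • b.2 = g'⁻¹ • a.2 := by
      rw [← h2, mul_inv_rev, mul_smul, inv_smul_smul]
    congr 1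
    exact Prod.ext (Subtype.ext e1.symm) e2.symm
  let ψ : Quot r₂ → Quot r₁ := Quot.lift ψ0 hψ0
  -- left inverse
  have hleft : ∀ q, ψ (φ q) = q := by
    refine Quot.ind fun a => ?_
    have h1 : (a.1 : X) ∈ (1 : G) • U := by
      rw [one_smul]; exact a.1.2
    simp only [ψ, φ, φ0]
    show ψ0 (⟨(a.1 : X), memW a.1.2⟩, a.2) = Quot.mk r₁ a
    rw [kψ _ 1 h1]
    congr 1
    refine Prod.ext (Subtype.ext ?_) ?_ <;> simp
  -- right inverse
  have hright : ∀ q, φ (ψ q) = q := by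
    refine Quot.ind fun b => ?_
    obtain ⟨g, hg⟩ := Set.mem_iUnion.mp b.1.2
    simp only [ψ, φ, ψ0]
    show φ (ψ0 b) = Quot.mk r₂ b
    rw [kψ b g hg]
    simp only [φ, φ0]
    refine Quot.sound ⟨g, ?_, ?_⟩ <;> simp
  -- continuity of φ
  have hφcont : Continuous φ := by
    refine continuous_quot_lift _ ?_
    exact continuous_quot_mk.comp
      (((continuous_subtype_val.comp continuous_fst).subtype_mk _).prodMk continuous_snd)
  -- continuity of ψ
  have hψ0cont : Continuous ψ0 := by
    rw [continuous_iff_continuousAt]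
    intro p
    obtain ⟨g, hg⟩ := Set.mem_iUnion.mp p.1.2
    set O : Set (↥W × E) := {q | (q.1 : X) ∈ g • U} with hOdef
    have hOopen : IsOpen O :=
      ((hUopen.smul g).preimage (continuous_subtype_val.comp continuous_fst))
    have hpO : p ∈ O := hg
    have hcO : ContinuousOn ψ0 O := by
      rw [continuousOn_iff_continuous_restrict]
      have : O.domRestrict ψ0 = fun q : ↥O =>
          Quot.mk r₁ (⟨g⁻¹ • ((q : ↥W × E).1 : X),
            Set.mem_smul_set_iff_inv_smul_mem.mp q.2⟩, g⁻¹ • (q : ↥W × E).2) := by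
        funext q
        exact kψ q.1 g q.2
      rw [this]
      refine continuous_quot_mk.comp (Continuous.prodMk ?_ ?_)
      · exact ((hX g⁻¹).comp
          (continuous_subtype_val.comp (continuous_fst.comp continuous_subtype_val))).subtype_mk _
      · exact (hE g⁻¹).comp (continuous_snd.comp continuous_subtype_val)
    exact hcO.continuousAt (hOopen.mem_nhds hpO)
  have hψcont : Continuous ψ := continuous_quot_lift _ hψ0cont
  exact ⟨⟨⟨φ, ψ, hleft, hright⟩, hφcont, hψcont⟩, fun a => rfl⟩
end

section
/- Let G be a group (with the discrete topology) acting continuously and properly discontinuously on a locally compact Hausdorff space X, and acting freely and continuously on a contractible, path-connected, locally path-connected space E such that every point of E has an open neighborhood V with (g•V) ∩ V = ∅ for all g ≠ 1. Let p : (X × E)/G → X/G be the map induced by the projection X × E → X (diagonal G-action on X × E). Then for every x ∈ X, the fiber p⁻¹([x]) is a K(G_x,1): its fundamental group (at any basepoint) is isomorphic to the stabilizer G_x, and its homotopy groups πₙ vanish for all n ≥ 2. -/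
/-!
The fibers of the Borel-space projection `p : (X × E)/G → X/G` of a global
quotient are Eilenberg–MacLane spaces `K(Gₓ,1)`: the fundamental group of the
fiber over `[x]` (at any basepoint) is isomorphic to the stabilizer `Gₓ`, and
all higher homotopy groups of the fiber vanish.
-/

open Pointwise
open Set Function unitInterval

universe u

section Covering

variable {Γ : Type u} [Group Γ] {E : Type u} [TopologicalSpace E] [MulAction Γ E]
  {B : Type u} [TopologicalSpace B]

/-- Bundled hypotheses: `π : E → B` is the orbit map of a free wandering action of `Γ` on `E`. -/
structure CovSetup (π : E → B) (Γ : outParam (Type u)) [Group Γ] [MulAction Γ E] : Prop where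
  cont_smul : ∀ γ : Γ, Continuous fun e : E => γ • e
  free : ∀ (γ : Γ) (e : E), γ • e = e → γ = 1
  wander : ∀ e : E, ∃ V : Set E, IsOpen V ∧ e ∈ V ∧ ∀ γ : Γ, γ ≠ 1 → (γ • V) ∩ V = ∅
  cont : Continuous π
  isOpenMap : IsOpenMap π
  surj : Surjective π
  fib : ∀ e e' : E, (π e = π e' ↔ e ∈ MulAction.orbit Γ e')

namespace CovSetup

variable {π : E → B} (hS : CovSetup π Γ)
include hS

theorem continuousConstSMul : ContinuousConstSMul Γ E := ⟨hS.cont_smul⟩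

theorem pi_smul (γ : Γ) (e : E) : π (γ • e) = π e :=
  (hS.fib _ _).2 ⟨γ, rfl⟩

theorem exists_smul_eq_of_pi_eq {e e' : E} (h : π e = π e') : ∃ γ : Γ, γ • e' = e :=
  (hS.fib _ _).1 h

/-- Uniqueness of lifts on preconnected sets. -/
theorem lift_unique {A : Type*} [TopologicalSpace A] {s : Set A}
    (hs : IsPreconnected s) {g₁ g₂ : A → E}
    (h₁ : ContinuousOn g₁ s) (h₂ : ContinuousOn g₂ s)
    (hl : ∀ a ∈ s, π (g₁ a) = π (g₂ a)) {a₀ : A} (ha₀ : a₀ ∈ s)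
    (he : g₁ a₀ = g₂ a₀) : EqOn g₁ g₂ s := by
  haveI := hS.continuousConstSMul
  haveI : PreconnectedSpace s := Subtype.preconnectedSpace hs
  set r₁ : s → E := s.restrict g₁ with hr₁
  set r₂ : s → E := s.restrict g₂ with hr₂
  have hc₁ : Continuous r₁ := h₁.restrict
  have hc₂ : Continuous r₂ := h₂.restrict
  set T : Set s := {p | r₁ p = r₂ p} with hT
  have hTopen : IsOpen T := by
    rw [isOpen_iff_mem_nhds]
    intro p hp
    obtain ⟨V, hVo, heV, hVw⟩ := hS.wander (r₁ p)
    have hW : (r₁ ⁻¹' V ∩ r₂ ⁻¹' V) ∈ nhds p := by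
      apply Filter.inter_mem
      · exact (hc₁.isOpen_preimage V hVo).mem_nhds heV
      · have hp' : r₂ p ∈ V := by
          have : r₁ p = r₂ p := hp
          rwa [this] at heV
        exact (hc₂.isOpen_preimage V hVo).mem_nhds hp'
    refine Filter.mem_of_superset hW ?_
    rintro w ⟨hw₁, hw₂⟩
    obtain ⟨γ, hγ⟩ := hS.exists_smul_eq_of_pi_eq (hl w.1 w.2 : π (g₁ w.1) = π (g₂ w.1)).symm
    by_cases hγ1 : γ = 1
    · show r₁ w = r₂ w
      rw [hγ1, one_smul] at hγ
      exact hγ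
    · exfalso
      have hmem : r₂ w ∈ (γ • V) ∩ V := ⟨⟨r₁ w, hw₁, hγ⟩, hw₂⟩
      rw [hVw γ hγ1] at hmem
      exact hmem
  have hTclosed : IsClosed T := by
    rw [← isOpen_compl_iff, isOpen_iff_mem_nhds]
    intro p hp
    obtain ⟨γ₀, hγ₀⟩ := hS.exists_smul_eq_of_pi_eq (hl p.1 p.2 : π (g₁ p.1) = π (g₂ p.1)).symm
    have hγ₀1 : γ₀ ≠ 1 := by
      rintro rfl
      refine hp (show r₁ p = r₂ p from ?_)
      show g₁ p.1 = g₂ p.1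
      rw [← hγ₀, one_smul]
    obtain ⟨V, hVo, heV, hVw⟩ := hS.wander (r₁ p)
    have hW : (r₁ ⁻¹' V ∩ r₂ ⁻¹' (γ₀ • V)) ∈ nhds p := by
      apply Filter.inter_mem
      · exact (hc₁.isOpen_preimage V hVo).mem_nhds heV
      · exact (hc₂.isOpen_preimage _ (hVo.smul γ₀)).mem_nhds ⟨r₁ p, heV, hγ₀⟩
    refine Filter.mem_of_superset hW ?_
    rintro w ⟨hw₁, hw₂⟩ (hwT : r₁ w = r₂ w)
    obtain ⟨γ, hγ⟩ := hS.exists_smul_eq_of_pi_eq (hl w.1 w.2 : π (g₁ w.1) = π (g₂ w.1)).symm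
    obtain ⟨v, hvV, hv⟩ := hw₂
    have hγγ₀ : γ = γ₀ := by
      by_contra hne
      have h1 : γ₀⁻¹ * γ ≠ 1 := by
        intro h
        exact hne ((inv_mul_eq_one.mp h).symm)
      have hmem : (γ₀⁻¹ * γ) • (r₁ w) ∈ ((γ₀⁻¹ * γ) • V) ∩ V := by
        constructor
        · exact ⟨r₁ w, hw₁, rfl⟩
        · have hv2 : (γ₀⁻¹ * γ) • (r₁ w) = v := by
            have hv' : γ₀ • v = g₂ w.1 := hv
            rw [mul_smul]
            show γ₀⁻¹ • (γ • g₁ w.1) = v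
            rw [hγ, ← hv', inv_smul_smul]
          rw [hv2]
          exact hvV
      rw [hVw _ h1] at hmem
      exact hmem
    apply hγ₀1
    rw [hγγ₀] at hγ
    apply hS.free γ₀ (g₁ w.1)
    rw [hγ]
    exact hwT.symm
  have hne : T.Nonempty := ⟨⟨a₀, ha₀⟩, (he : r₁ ⟨a₀, ha₀⟩ = r₂ ⟨a₀, ha₀⟩)⟩
  have hTuniv : T = univ := IsClopen.eq_univ ⟨hTclosed, hTopen⟩ hne
  intro a ha
  have h2 : (⟨a, ha⟩ : s) ∈ T := hTuniv ▸ mem_univ _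
  exact h2

/-- A continuous map into a fiber over a preconnected set is constant. -/
theorem lift_const {A : Type*} [TopologicalSpace A] {s : Set A}
    (hs : IsPreconnected s) {g : A → E} (hg : ContinuousOn g s)
    {b : B} (hb : ∀ a ∈ s, π (g a) = b) {a₀ : A} (ha₀ : a₀ ∈ s) :
    ∀ a ∈ s, g a = g a₀ :=
  hS.lift_unique hs hg continuousOn_const
    (fun a ha => by rw [hb a ha, hb a₀ ha₀]) ha₀ rfl

end CovSetup

end Covering
namespace CovSetup

variable {Γ : Type u} [Group Γ] {E : Type u} [TopologicalSpace E] [MulAction Γ E]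
  {B : Type u} [TopologicalSpace B]
variable {π : E → B} (hS : CovSetup π Γ)
include hS

theorem injOn_of_wander {V : Set E} (hVw : ∀ γ : Γ, γ ≠ 1 → (γ • V) ∩ V = ∅) :
    InjOn π V := by
  intro v hv v' hv' hπ
  obtain ⟨γ, hγ⟩ := hS.exists_smul_eq_of_pi_eq hπ
  by_cases h1 : γ = 1
  · rw [h1, one_smul] at hγ; exact hγ.symm
  · exfalso
    have : v ∈ (γ • V) ∩ V := ⟨⟨v', hv', hγ⟩, hv⟩
    rw [hVw γ h1] at this
    exact this

/-- A continuous local section over the image of a wandering open set. -/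
theorem exists_section {V : Set E} (hVo : IsOpen V) (hVne : V.Nonempty)
    (hVw : ∀ γ : Γ, γ ≠ 1 → (γ • V) ∩ V = ∅) :
    ∃ sec : B → E, ContinuousOn sec (π '' V) ∧
      (∀ b ∈ π '' V, π (sec b) = b ∧ sec b ∈ V) ∧ (∀ v ∈ V, sec (π v) = v) := by
  classical
  have hinj := hS.injOn_of_wander hVw
  set f : V → (π '' V : Set B) := fun v => ⟨π v, mem_image_of_mem π v.2⟩ with hf
  have hbij : Function.Bijective f := by
    constructor
    · intro a b hab
      exact Subtype.ext (hinj a.2 b.2 (congrArg Subtype.val hab))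
    · rintro ⟨b, v, hv, rfl⟩
      exact ⟨⟨v, hv⟩, rfl⟩
  have hcont : Continuous f := (hS.cont.comp continuous_subtype_val).subtype_mk _
  have hopen : IsOpenMap f := by
    intro U hU
    obtain ⟨O, hO, rfl⟩ := isOpen_induced_iff.mp hU
    have himg : f '' (Subtype.val ⁻¹' O) = Subtype.val ⁻¹' (π '' (O ∩ V)) := by
      ext b
      constructor
      · rintro ⟨v, hvO, rfl⟩
        exact ⟨v, ⟨hvO, v.2⟩, rfl⟩
      · rintro ⟨w, ⟨hwO, hwV⟩, hb⟩
        exact ⟨⟨w, hwV⟩, hwO, Subtype.ext hb⟩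
    rw [himg]
    exact (hS.isOpenMap _ (hO.inter hVo)).preimage continuous_subtype_val
  set e : V ≃ (π '' V : Set B) := Equiv.ofBijective f hbij with he
  have hecont : Continuous e := hcont
  have heopen : IsOpenMap e := hopen
  set homeo := Equiv.toHomeomorphOfContinuousOpen e hecont heopen with hhomeo
  refine ⟨fun b => if hb : b ∈ π '' V then (homeo.symm ⟨b, hb⟩ : E) else hVne.choose,
    ?_, ?_, ?_⟩
  · rw [continuousOn_iff_continuous_restrict]
    have : (π '' V).domRestrict (fun b => if hb : b ∈ π '' V then (homeo.symm ⟨b, hb⟩ : E)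
        else hVne.choose) =
        fun b : (π '' V : Set B) => (homeo.symm b : E) := by
      funext b
      exact dif_pos b.2
    rw [this]
    exact continuous_subtype_val.comp homeo.symm.continuous
  · intro b hb
    simp only [dif_pos hb]
    have h1 : f (homeo.symm ⟨b, hb⟩) = ⟨b, hb⟩ := homeo.apply_symm_apply ⟨b, hb⟩
    constructor
    · exact congrArg Subtype.val h1
    · exact (homeo.symm ⟨b, hb⟩).2
  · intro v hv
    have hmem : π v ∈ π '' V := mem_image_of_mem π hv
    simp only [dif_pos hmem]
    have : homeo ⟨v, hv⟩ = ⟨π v, hmem⟩ := rfl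
    rw [← this, homeo.symm_apply_apply]

theorem sheets_disjoint {V : Set E} (hVw : ∀ γ : Γ, γ ≠ 1 → (γ • V) ∩ V = ∅)
    {γ γ' : Γ} (h : γ ≠ γ') : (γ • V) ∩ (γ' • V) = ∅ := by
  ext v
  simp only [Set.mem_inter_iff, Set.mem_empty_iff_false, iff_false]
  rintro ⟨⟨a, ha, rfl⟩, ⟨b, hb, hba⟩⟩
  have h1 : γ'⁻¹ * γ ≠ 1 := fun hh => h (inv_mul_eq_one.mp hh).symm
  have : (γ'⁻¹ * γ) • a ∈ ((γ'⁻¹ * γ) • V) ∩ V := by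
    refine ⟨⟨a, ha, rfl⟩, ?_⟩
    have hba' : γ' • b = γ • a := hba
    rw [mul_smul, ← hba', inv_smul_smul]
    exact hb
  rw [hVw _ h1] at this
  exact this

theorem mem_sheet_of_pi_mem {V : Set E} {e : E} (h : π e ∈ π '' V) :
    ∃ γ : Γ, e ∈ γ • V := by
  obtain ⟨v, hv, hπ⟩ := h
  obtain ⟨γ, hγ⟩ := hS.exists_smul_eq_of_pi_eq hπ.symm
  exact ⟨γ, ⟨v, hv, hγ⟩⟩

end CovSetup
section BoxLemmas

open unitInterval

variable {N : Type} [Fintype N]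

/-- A closed coordinate box inside the cube `N → I`. -/
def IBox (a b : N → ℝ) : Set (N → I) :=
  {u | ∀ i, a i ≤ (u i : ℝ) ∧ (u i : ℝ) ≤ b i}

theorem isClosed_IBox (a b : N → ℝ) : IsClosed (IBox a b) := by
  have : IBox a b = ⋂ i, ((fun u : N → I => (u i : ℝ)) ⁻¹' Set.Icc (a i) (b i)) := by
    ext u; simp [IBox, Set.mem_iInter, Set.mem_Icc]
  rw [this]
  exact isClosed_iInter fun i =>
    IsClosed.preimage (continuous_subtype_val.comp (continuous_apply i)) isClosed_Icc

theorem isPreconnected_IBox {a b : N → ℝ} (ha : ∀ i, 0 ≤ a i) (hb : ∀ i, b i ≤ 1)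
    (hab : ∀ i, a i ≤ b i) : IsPreconnected (IBox a b) := by
  have hmem : ∀ (x : I) (i : N), max (a i) (min (b i) (x : ℝ)) ∈ I := by
    intro x i
    constructor
    · exact le_trans (ha i) (le_max_left _ _)
    · exact max_le (le_trans (hab i) (hb i)) (le_trans (min_le_left _ _) (hb i))
  set φ : (N → I) → (N → I) := fun u i => ⟨max (a i) (min (b i) (u i : ℝ)), hmem (u i) i⟩
    with hφ
  have hφc : Continuous φ := by
    apply continuous_pi
    intro i
    exact Continuous.subtype_mk
      (continuous_const.max (continuous_const.min
        (continuous_subtype_val.comp (continuous_apply i)))) _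
  have hrange : Set.range φ = IBox a b := by
    apply Set.Subset.antisymm
    · rintro _ ⟨u, rfl⟩
      intro i
      refine ⟨le_max_left _ _, max_le (hab i) (min_le_left _ _)⟩
    · intro u hu
      refine ⟨u, ?_⟩
      funext i
      apply Subtype.ext
      show max (a i) (min (b i) (u i : ℝ)) = (u i : ℝ)
      rw [min_eq_right (hu i).2, max_eq_right (hu i).1]
  rw [← hrange]
  exact isPreconnected_range hφc

theorem IBox_inter (a b a' b' : N → ℝ) :
    IBox a b ∩ IBox a' b' = IBox (fun i => max (a i) (a' i)) (fun i => min (b i) (b' i)) := by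
  ext u
  simp only [Set.mem_inter_iff, IBox, Set.mem_setOf_eq, max_le_iff, le_min_iff]
  constructor
  · rintro ⟨h1, h2⟩ i
    exact ⟨⟨(h1 i).1, (h2 i).1⟩, (h1 i).2, (h2 i).2⟩
  · intro h
    exact ⟨fun i => ⟨(h i).1.1, (h i).2.1⟩, fun i => ⟨(h i).1.2, (h i).2.2⟩⟩

/-- Subdivision indices: every point of `[0,1]` is in some `[k/n, (k+1)/n]`. -/
theorem exists_fin_div {n : ℕ} (hn : 0 < n) (r : ℝ) (h0 : 0 ≤ r) (h1 : r ≤ 1) :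
    ∃ k : Fin n, (k : ℝ)/n ≤ r ∧ r ≤ ((k : ℝ)+1)/n := by
  have hn' : (0:ℝ) < n := by exact_mod_cast hn
  by_cases h : ⌊r * n⌋₊ < n
  · refine ⟨⟨⌊r * n⌋₊, h⟩, ?_, ?_⟩
    · rw [div_le_iff₀ hn']
      calc ((⌊r * n⌋₊ : ℝ)) ≤ r * n := Nat.floor_le (by positivity)
        _ = r * n := rfl
    · rw [le_div_iff₀ hn']
      exact le_of_lt (Nat.lt_floor_add_one (r * n))
  · push_neg at h
    have hne : n - 1 < n := Nat.sub_lt hn Nat.one_pos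
    refine ⟨⟨n - 1, hne⟩, ?_, ?_⟩
    · simp only []
      rw [div_le_iff₀ hn']
      have : ((n:ℝ)) ≤ r * n := by
        have := (Nat.le_floor_iff (by positivity : (0:ℝ) ≤ r * n)).mp h
        exact this
      have hcast : ((n - 1 : ℕ) : ℝ) = (n : ℝ) - 1 := by
        have : (1:ℕ) ≤ n := hn
        push_cast [this]
        ring
      rw [hcast]
      nlinarith
    · have hcast : ((n - 1 : ℕ) : ℝ) = (n : ℝ) - 1 := by
        have : (1:ℕ) ≤ n := hn
        push_cast [this]
        ring
      rw [hcast, le_div_iff₀ hn']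
      nlinarith

theorem Icoe_min (a b : I) : ((min a b : I) : ℝ) = min (a : ℝ) (b : ℝ) := by
  rcases le_total a b with h | h
  · rw [min_eq_left h, min_eq_left (Subtype.coe_le_coe.mpr h)]
  · rw [min_eq_right h, min_eq_right (Subtype.coe_le_coe.mpr h)]

theorem dist_le_of_mem_Icc' {x y lo len : ℝ} (hx : lo ≤ x ∧ x ≤ lo + len)
    (hy : lo ≤ y ∧ y ≤ lo + len) : dist x y ≤ len := by
  rw [Real.dist_eq, abs_sub_le_iff]
  constructor <;> linarith [hx.1, hx.2, hy.1, hy.2]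

end BoxLemmas
namespace CovSetup

open unitInterval

variable {Γ : Type u} [Group Γ] {E : Type u} [TopologicalSpace E] [MulAction Γ E]
  {B : Type u} [TopologicalSpace B]
variable {π : E → B} (hS : CovSetup π Γ)
include hS

/-- The homotopy lifting property for the covering `π` with a cube as parameter space. -/
theorem homotopy_lift {N : Type} [Fintype N] (F : C((N → I) × I, B)) (g₀ : C(N → I, E))
    (hg₀ : ∀ u, π (g₀ u) = F (u, 0)) :
    ∃ Gc : C((N → I) × I, E), (∀ w, π (Gc w) = F w) ∧ ∀ u, Gc (u, 0) = g₀ u := by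
  classical
  haveI := hS.continuousConstSMul
  -- evenly covered neighborhoods
  have hcov : ∀ w : (N → I) × I, ∃ V : Set E,
      (IsOpen V ∧ V.Nonempty ∧ ∀ γ : Γ, γ ≠ 1 → (γ • V) ∩ V = ∅) ∧ F w ∈ π '' V := by
    intro w
    obtain ⟨e, he⟩ := hS.surj (F w)
    obtain ⟨V, hVo, heV, hw⟩ := hS.wander e
    exact ⟨V, ⟨hVo, ⟨e, heV⟩, hw⟩, ⟨e, heV, he⟩⟩
  choose Vof hVof hFVof using hcov
  have hopen : ∀ w : (N → I) × I, IsOpen (F ⁻¹' (π '' Vof w)) := fun w =>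
    F.continuous.isOpen_preimage _ (hS.isOpenMap _ (hVof w).1)
  have hcovers : (Set.univ : Set ((N → I) × I)) ⊆ ⋃ w, F ⁻¹' (π '' Vof w) := fun w _ =>
    Set.mem_iUnion.mpr ⟨w, hFVof w⟩
  obtain ⟨δ, hδ, hball⟩ := lebesgue_number_lemma_of_metric isCompact_univ hopen hcovers
  obtain ⟨n₀, hn₀⟩ := exists_nat_one_div_lt hδ
  set n : ℕ := n₀ + 1 with hn
  have hnpos : 0 < n := Nat.succ_pos _
  have hnR : (0:ℝ) < n := by exact_mod_cast hnpos
  have h1n : 1/(n:ℝ) < δ := by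
    have : ((n₀:ℝ) + 1) = (n:ℝ) := by rw [hn]; push_cast; ring
    rw [← this]; exact hn₀
  have hdivle : ∀ x y : ℝ, x ≤ y → x/(n:ℝ) ≤ y/(n:ℝ) := fun x y h => by
    rw [div_le_div_iff₀ hnR hnR]; nlinarith
  -- the spatial grid
  set Dj : (N → Fin n) → Set (N → I) :=
    fun j => IBox (fun i => (j i : ℝ)/n) (fun i => ((j i : ℝ)+1)/n) with hDjdef
  have hDjbounds : ∀ j : N → Fin n,
      (∀ i, 0 ≤ (j i : ℝ)/(n:ℝ)) ∧ (∀ i, ((j i : ℝ)+1)/(n:ℝ) ≤ 1) ∧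
      (∀ i, (j i : ℝ)/(n:ℝ) ≤ ((j i : ℝ)+1)/(n:ℝ)) := by
    intro j
    refine ⟨fun i => by positivity, fun i => ?_, fun i => hdivle _ _ (by linarith)⟩
    rw [div_le_one hnR]
    exact_mod_cast (j i).2
  have hDjpre : ∀ j, IsPreconnected (Dj j) := fun j =>
    isPreconnected_IBox (hDjbounds j).1 (hDjbounds j).2.1 (hDjbounds j).2.2
  have hDc : ∀ (j : N → Fin n) (i : N), ((j i : ℝ)/(n:ℝ)) ∈ I := fun j i =>
    ⟨by positivity, by rw [div_le_one hnR]; exact_mod_cast le_of_lt (j i).2⟩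
  set Dcorner : (N → Fin n) → (N → I) := fun j i => ⟨(j i : ℝ)/n, hDc j i⟩ with hDcorner
  have hDcmem : ∀ j, Dcorner j ∈ Dj j := fun j i =>
    ⟨le_rfl, hdivle _ _ (by linarith)⟩
  -- time subdivision
  set τ : ℕ → I := fun k => ⟨min ((k:ℝ)/n) 1, le_min (by positivity) zero_le_one,
    min_le_right _ _⟩ with hτdef
  have hτ : ∀ k : ℕ, k ≤ n → (τ k : ℝ) = (k:ℝ)/n := by
    intro k hk
    show min ((k:ℝ)/n) 1 = (k:ℝ)/n
    rw [min_eq_left]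
    rw [div_le_one hnR]
    exact_mod_cast hk
  -- evenly covered sets for the cells
  have hcell : ∀ (j : N → Fin n) (kf : Fin n), ∃ V : Set E,
      (IsOpen V ∧ V.Nonempty ∧ ∀ γ : Γ, γ ≠ 1 → (γ • V) ∩ V = ∅) ∧
      ∀ w : (N → I) × I, w.1 ∈ Dj j →
        ((kf:ℝ)/n ≤ (w.2:ℝ) ∧ (w.2:ℝ) ≤ ((kf:ℝ)+1)/n) → F w ∈ π '' V := by
    intro j kf
    have hkf : ((kf:ℝ)/(n:ℝ)) ∈ I :=
      ⟨by positivity, by rw [div_le_one hnR]; exact_mod_cast le_of_lt kf.2⟩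
    set w₀ : (N → I) × I := (Dcorner j, ⟨(kf:ℝ)/n, hkf⟩) with hw₀
    obtain ⟨w', hw'⟩ := hball w₀ (Set.mem_univ _)
    refine ⟨Vof w', hVof w', ?_⟩
    intro w hw1 hw2
    apply hw'
    rw [Metric.mem_ball]
    refine lt_of_le_of_lt ?_ h1n
    rw [Prod.dist_eq]
    apply max_le
    · rw [dist_pi_le_iff (by positivity)]
      intro i
      rw [Subtype.dist_eq]
      apply dist_le_of_mem_Icc' (lo := (j i : ℝ)/n)
      · have ha : (j i : ℝ)/n ≤ (w.1 i : ℝ) := (hw1 i).1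
        have hb : (w.1 i : ℝ) ≤ ((j i : ℝ)+1)/n := (hw1 i).2
        have hsplit : ((j i : ℝ)+1)/(n:ℝ) = (j i : ℝ)/n + 1/n := by ring
        exact ⟨ha, by linarith⟩
      · exact ⟨le_rfl, by linarith [one_div_nonneg.mpr (le_of_lt hnR)]⟩
    · rw [Subtype.dist_eq]
      apply dist_le_of_mem_Icc' (lo := (kf : ℝ)/n)
      · have hsplit : ((kf : ℝ)+1)/(n:ℝ) = (kf : ℝ)/n + 1/n := by ring
        exact ⟨hw2.1, by linarith [hw2.2]⟩
      · exact ⟨le_rfl, by linarith [one_div_nonneg.mpr (le_of_lt hnR)]⟩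
  choose VC hVCprop hVCin using hcell
  have hsec : ∀ (j : N → Fin n) (kf : Fin n), ∃ sec : B → E,
      ContinuousOn sec (π '' VC j kf) ∧
      (∀ b ∈ π '' VC j kf, π (sec b) = b ∧ sec b ∈ VC j kf) ∧
      (∀ v ∈ VC j kf, sec (π v) = v) := fun j kf =>
    hS.exists_section (hVCprop j kf).1 (hVCprop j kf).2.1 (hVCprop j kf).2.2
  choose secC hsecCont hsecProp hsecInv using hsec
  -- choice of spatial cell for each point
  have hDcov : ∀ u : N → I, ∃ j, u ∈ Dj j := by
    intro u
    have h := fun i => exists_fin_div hnpos (u i) (u i).2.1 (u i).2.2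
    choose jj h1 h2 using h
    exact ⟨jj, fun i => ⟨h1 i, h2 i⟩⟩
  choose jfun hjfun using hDcov
  -- the inductive construction over time steps
  suffices h : ∀ k : ℕ, k ≤ n → ∃ Gc : C((N → I) × I, E),
      (∀ w, π (Gc w) = F (w.1, min w.2 (τ k))) ∧ ∀ u, Gc (u, 0) = g₀ u by
    obtain ⟨Gc, h1, h2⟩ := h n le_rfl
    refine ⟨Gc, fun w => ?_, h2⟩
    rw [h1 w]
    congr 2
    have hτn : τ n = 1 := Subtype.ext (by rw [hτ n le_rfl, div_self (ne_of_gt hnR)]; rfl)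
    rw [hτn]
    exact min_eq_left (le_one' )
  intro k
  induction k with
  | zero =>
    intro _
    refine ⟨⟨fun w => g₀ w.1, g₀.continuous.comp continuous_fst⟩, fun w => ?_, fun u => rfl⟩
    have hτ0 : τ 0 = 0 := Subtype.ext (by rw [hτ 0 (Nat.zero_le n)]; simp)
    show π (g₀ w.1) = _
    rw [hg₀]
    congr 2
    rw [hτ0]
    exact (min_eq_right (nonneg' )).symm
  | succ k ih =>
    intro hk1
    have hk : k < n := hk1
    obtain ⟨Gk, hGkπ, hGk0⟩ := ih (Nat.le_of_succ_le hk1)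
    set kf : Fin n := ⟨k, hk⟩ with hkf
    have hτk : (τ k : ℝ) = (k:ℝ)/n := hτ k (le_of_lt hk)
    have hτk1 : (τ (k+1) : ℝ) = ((k:ℝ)+1)/n := by
      rw [hτ (k+1) hk1]; push_cast; ring
    have hττ : τ k ≤ τ (k+1) := by
      rw [← Subtype.coe_le_coe, hτk, hτk1]
      exact hdivle _ _ (by linarith)
    have hGktop : ∀ u, π (Gk (u, τ k)) = F (u, τ k) := by
      intro u
      rw [hGkπ (u, τ k)]
      congr 2
      exact min_self _
    have htk : ((kf:ℝ))/(n:ℝ) ≤ ((τ k : I):ℝ) ∧ ((τ k : I):ℝ) ≤ ((kf:ℝ)+1)/n := by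
      rw [hτk]
      exact ⟨le_rfl, hdivle _ _ (by show (k:ℝ) ≤ (k:ℝ) + 1; linarith)⟩
    -- the sheet over each spatial cell
    have hsheet0 : ∀ j, ∃ γ : Γ, Gk (Dcorner j, τ k) ∈ γ • VC j kf := by
      intro j
      apply hS.mem_sheet_of_pi_mem
      rw [hGktop]
      exact hVCin j kf (Dcorner j, τ k) (hDcmem j) htk
    choose γsh hγsh using hsheet0
    have hsheet : ∀ j, ∀ u ∈ Dj j, Gk (u, τ k) ∈ γsh j • VC j kf := by
      intro j
      set f : (N → I) → E := fun u => Gk (u, τ k) with hfdef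
      have hfc : Continuous f := Gk.continuous.comp (continuous_id.prodMk continuous_const)
      have hsub : Dj j ⊆ f ⁻¹' (γsh j • VC j kf) ∪
          f ⁻¹' (⋃ γ ∈ {γ : Γ | γ ≠ γsh j}, γ • VC j kf) := by
        intro u hu
        have hmem : π (f u) ∈ π '' VC j kf := by
          show π (Gk (u, τ k)) ∈ _
          rw [hGktop]
          exact hVCin j kf (u, τ k) hu htk
        obtain ⟨γ, hγ⟩ := hS.mem_sheet_of_pi_mem hmem
        by_cases hγe : γ = γsh j
        · left; rwa [hγe] at hγ
        · right; exact Set.mem_iUnion₂.mpr ⟨γ, hγe, hγ⟩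
      have hdisj : Disjoint (f ⁻¹' (γsh j • VC j kf))
          (f ⁻¹' (⋃ γ ∈ {γ : Γ | γ ≠ γsh j}, γ • VC j kf)) := by
        rw [Set.disjoint_left]
        intro e h1 h2
        obtain ⟨γ, hγne, hγmem⟩ := Set.mem_iUnion₂.mp h2
        have hd := sheets_disjoint hS (hVCprop j kf).2.2 (Ne.symm hγne)
        have : f e ∈ (γsh j • VC j kf) ∩ (γ • VC j kf) := ⟨h1, hγmem⟩
        rw [hd] at this
        exact this
      have hmain := IsPreconnected.subset_left_of_subset_union
        (hfc.isOpen_preimage _ (((hVCprop j kf).1).smul (γsh j)))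
        (hfc.isOpen_preimage _ (isOpen_biUnion fun γ _ => ((hVCprop j kf).1).smul γ))
        hdisj hsub ⟨Dcorner j, hDcmem j, hγsh j⟩ (hDjpre j)
      exact fun u hu => hmain hu
    -- clamped time and local lifts
    have hmedmem : ∀ t : I, max ((k:ℝ)/n) (min (((k:ℝ)+1)/n) (t:ℝ)) ∈ I := by
      intro t
      constructor
      · exact le_trans (by positivity) (le_max_left _ _)
      · apply max_le
        · rw [div_le_one hnR]; exact_mod_cast le_of_lt hk
        · exact le_trans (min_le_right _ _) t.2.2
    set med : I → I := fun t => ⟨max ((k:ℝ)/n) (min (((k:ℝ)+1)/n) (t:ℝ)), hmedmem t⟩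
      with hmeddef
    have hmedc : Continuous med :=
      Continuous.subtype_mk (continuous_const.max (continuous_const.min
        continuous_subtype_val)) _
    have hmedrange : ∀ t : I, ((kf:ℝ))/(n:ℝ) ≤ ((med t : I):ℝ) ∧
        ((med t : I):ℝ) ≤ ((kf:ℝ)+1)/n := by
      intro t
      refine ⟨le_max_left _ _, max_le (hdivle _ _ (by show (k:ℝ) ≤ (k:ℝ) + 1; linarith)) (min_le_left _ _)⟩
    set Lj : (N → Fin n) → (N → I) × I → E :=
      fun j w => γsh j • secC j kf (F (w.1, med w.2)) with hLjdef
    have hFmem : ∀ (j) (w : (N → I) × I), w.1 ∈ Dj j →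
        F (w.1, med w.2) ∈ π '' VC j kf := fun j w hw =>
      hVCin j kf (w.1, med w.2) hw (hmedrange w.2)
    have hLπ : ∀ (j) (w : (N → I) × I), w.1 ∈ Dj j →
        π (Lj j w) = F (w.1, med w.2) := by
      intro j w hw
      show π (γsh j • _) = _
      rw [hS.pi_smul]
      exact (hsecProp j kf _ (hFmem j w hw)).1
    have hinnerc : Continuous fun w : (N → I) × I => F (w.1, med w.2) :=
      F.continuous.comp (continuous_fst.prodMk (hmedc.comp continuous_snd))
    have hLcont : ∀ j, ContinuousOn (Lj j) (Dj j ×ˢ (Set.univ : Set I)) := by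
      intro j
      apply Continuous.comp_continuousOn (hS.cont_smul (γsh j))
      apply ContinuousOn.comp (hsecCont j kf) hinnerc.continuousOn
      intro w hw
      exact hFmem j w hw.1
    have hmedτk : med (τ k) = τ k := by
      apply Subtype.ext
      show max ((k:ℝ)/n) (min (((k:ℝ)+1)/n) ((τ k : I):ℝ)) = ((τ k : I):ℝ)
      rw [hτk, min_eq_right (hdivle _ _ (by norm_num)), max_self]
    have hLbot : ∀ j, ∀ u ∈ Dj j, Lj j (u, τ k) = Gk (u, τ k) := by
      intro j u hu
      obtain ⟨v, hvV, hveq⟩ := hsheet j u hu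
      have hveq' : γsh j • v = Gk (u, τ k) := hveq
      have hπv : π v = F (u, τ k) := by
        rw [← hGktop u, ← hveq', hS.pi_smul]
      show γsh j • secC j kf (F (u, med (τ k))) = Gk (u, τ k)
      rw [hmedτk, ← hπv, hsecInv j kf v hvV, hveq']
    have hLeq : ∀ (j j') (w : (N → I) × I), w.1 ∈ Dj j → w.1 ∈ Dj j' →
        Lj j w = Lj j' w := by
      intro j j' w hw hw'
      set s : Set ((N → I) × I) := (Dj j ∩ Dj j') ×ˢ (Set.univ : Set I) with hsdef
      have hsPre : IsPreconnected s := by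
        apply IsPreconnected.prod _ isPreconnected_univ
        rw [hDjdef]
        show IsPreconnected (IBox _ _ ∩ IBox _ _)
        rw [IBox_inter]
        apply isPreconnected_IBox
        · intro i; exact le_max_of_le_left ((hDjbounds j).1 i)
        · intro i; exact le_trans (min_le_left _ _) ((hDjbounds j).2.1 i)
        · intro i
          have h1 := hw i
          have h2 := hw' i
          refine le_min (max_le ?_ ?_) (max_le ?_ ?_)
          · exact le_trans h1.1 h1.2
          · exact le_trans h2.1 h1.2
          · exact le_trans h1.1 h2.2
          · exact le_trans h2.1 h2.2
      have hlift : ∀ ww ∈ s, π (Lj j ww) = π (Lj j' ww) := by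
        intro ww hww
        rw [hLπ j ww hww.1.1, hLπ j' ww hww.1.2]
      have ha₀ : ((w.1, τ k) : (N → I) × I) ∈ s := ⟨⟨hw, hw'⟩, Set.mem_univ _⟩
      have heq0 : Lj j (w.1, τ k) = Lj j' (w.1, τ k) := by
        rw [hLbot j w.1 hw, hLbot j' w.1 hw']
      have hmono : s ⊆ Dj j ×ˢ (Set.univ : Set I) := fun p hp => ⟨hp.1.1, hp.2⟩
      have hmono' : s ⊆ Dj j' ×ˢ (Set.univ : Set I) := fun p hp => ⟨hp.1.2, hp.2⟩
      have hfin := hS.lift_unique hsPre ((hLcont j).mono hmono) ((hLcont j').mono hmono')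
        hlift ha₀ heq0
      exact hfin ⟨⟨hw, hw'⟩, Set.mem_univ _⟩
    -- glue the local lifts over the spatial cells
    set L : (N → I) × I → E := fun w => Lj (jfun w.1) w with hLdef
    have hLc : Continuous L := by
      apply LocallyFinite.continuous
        (f := fun j : N → Fin n => Dj j ×ˢ (Set.univ : Set I))
        (locallyFinite_of_finite _)
      · apply Set.eq_univ_of_forall
        intro w
        exact Set.mem_iUnion.mpr ⟨jfun w.1, ⟨hjfun w.1, Set.mem_univ _⟩⟩
      · exact fun j => (isClosed_IBox _ _).prod isClosed_univ
      · intro j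
        apply (hLcont j).congr
        intro w hw
        exact hLeq (jfun w.1) j w (hjfun w.1) hw.1
    have hLπ' : ∀ w : (N → I) × I, π (L w) = F (w.1, med w.2) := fun w =>
      hLπ (jfun w.1) w (hjfun w.1)
    have hLbot' : ∀ u, L (u, τ k) = Gk (u, τ k) := fun u => hLbot (jfun u) u (hjfun u)
    -- combine with the previous stage in time
    set Gk1 : (N → I) × I → E := fun w => if w.2 ≤ τ k then Gk w else L w with hGk1def
    have hGk1c : Continuous Gk1 := by
      apply Continuous.if_le Gk.continuous hLc continuous_snd continuous_const
      intro w hw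
      have h1 : Gk w = Gk (w.1, τ k) := by rw [← hw]
      have h2 : L w = L (w.1, τ k) := by rw [← hw]
      rw [h1, h2, hLbot']
    refine ⟨⟨Gk1, hGk1c⟩, ?_, ?_⟩
    · intro w
      show π (if w.2 ≤ τ k then Gk w else L w) = F (w.1, min w.2 (τ (k+1)))
      by_cases hw : w.2 ≤ τ k
      · rw [if_pos hw, hGkπ w]
        congr 2
        rw [min_eq_left hw, min_eq_left (le_trans hw hττ)]
      · push_neg at hw
        rw [if_neg (not_le.mpr hw), hLπ' w]
        congr 2
        apply Subtype.ext
        show max ((k:ℝ)/n) (min (((k:ℝ)+1)/n) ((w.2 : I):ℝ)) = ((min w.2 (τ (k+1)) : I) : ℝ)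
        rw [Icoe_min, hτk1]
        have hwk : (k:ℝ)/n ≤ (w.2 : ℝ) := by
          rw [← hτk]
          exact le_of_lt (Subtype.coe_lt_coe.mpr hw)
        rw [max_eq_right (le_min (hdivle _ _ (by norm_num)) hwk), min_comm]
    · intro u
      show (if (0:I) ≤ τ k then Gk (u, 0) else L (u, 0)) = g₀ u
      rw [if_pos (nonneg' ), hGk0 u]

/-- Lifting continuous maps from cubes, with value prescribed at the corner. -/
theorem cube_lift_aux (m : ℕ) :
    ∀ (N : Type) [Fintype N] [DecidableEq N], Fintype.card N = m →
    ∀ (f : C(N → I, B)) (e : E), π e = f (fun _ => 0) →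
    ∃ g : C(N → I, E), (∀ u, π (g u) = f u) ∧ g (fun _ => 0) = e := by
  induction m with
  | zero =>
    intro N _ _ hcard f e he
    haveI : IsEmpty N := Fintype.card_eq_zero_iff.mp hcard
    refine ⟨⟨fun _ => e, continuous_const⟩, fun u => ?_, rfl⟩
    have : u = fun _ => (0 : I) := funext fun i => isEmptyElim i
    rw [this] at *
    exact he
  | succ m ih =>
    intro N _ _ hcard f e he
    haveI : Nonempty N := Fintype.card_pos_iff.mp (by omega)
    classical
    set i₀ : N := Classical.arbitrary N with hi₀
    have hcard' : Fintype.card { j : N // j ≠ i₀ } = m := by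
      have h1 : Fintype.card { j : N // j = i₀ } = 1 := Fintype.card_subtype_eq i₀
      have h2 := Fintype.card_subtype_compl (fun j : N => j = i₀)
      rw [h1, hcard] at h2
      simpa using h2
    set homeo : (N → I) ≃ₜ I × ({ j : N // j ≠ i₀ } → I) := Homeomorph.funSplitAt I i₀ with hhomeo
    set φ : (({ j : N // j ≠ i₀ }) → I) × I → (N → I) := fun w => homeo.symm (w.2, w.1) with hφ
    have hφc : Continuous φ :=
      homeo.symm.continuous.comp (continuous_snd.prodMk continuous_fst)
    set F : C((({ j : N // j ≠ i₀ }) → I) × I, B) := f.comp ⟨φ, hφc⟩ with hF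
    have hφ0 : φ ((fun _ => 0), 0) = fun _ => (0 : I) := by
      funext j
      show (homeo.symm (0, fun _ => 0)) j = 0
      rw [hhomeo, Homeomorph.funSplitAt_symm_apply]
      by_cases hj : j = i₀ <;> simp [hj]
    set f₀ : C(({ j : N // j ≠ i₀ }) → I, B) := ⟨fun u => F (u, 0), F.continuous.comp
      (continuous_id.prodMk continuous_const)⟩ with hf₀
    have he₀ : π e = f₀ (fun _ => 0) := by
      show π e = F ((fun _ => 0), 0)
      show π e = f (φ ((fun _ => 0), 0))
      rw [hφ0]
      exact he
    obtain ⟨g₀, hg₀π, hg₀c⟩ := ih { j : N // j ≠ i₀ } hcard' f₀ e he₀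
    obtain ⟨Gc, hGcπ, hGc0⟩ := hS.homotopy_lift F g₀ (fun u => hg₀π u)
    set ψ : (N → I) → (({ j : N // j ≠ i₀ }) → I) × I :=
      fun u => ((fun j => u j.1), u i₀) with hψ
    have hψc : Continuous ψ := by
      rw [hψ]
      exact (continuous_pi fun j => continuous_apply (j.1 : N)).prodMk (continuous_apply i₀)
    have hφψ : ∀ u, φ (ψ u) = u := by
      intro u
      show homeo.symm (u i₀, fun j => u j.1) = u
      have h3 : (u i₀, fun j : { j : N // j ≠ i₀ } => u j.1) = homeo u := rfl
      rw [h3, homeo.symm_apply_apply]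
    refine ⟨Gc.comp ⟨ψ, hψc⟩, fun u => ?_, ?_⟩
    · show π (Gc (ψ u)) = f u
      rw [hGcπ (ψ u)]
      show f (φ (ψ u)) = f u
      rw [hφψ]
    · show Gc (ψ (fun _ => 0)) = e
      have : ψ (fun _ => 0) = ((fun _ => 0), 0) := rfl
      rw [this, hGc0]
      exact hg₀c

theorem cube_lift {N : Type} [Fintype N] [DecidableEq N]
    (f : C(N → I, B)) (e : E) (he : π e = f (fun _ => 0)) :
    ∃ g : C(N → I, E), (∀ u, π (g u) = f u) ∧ g (fun _ => 0) = e :=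
  hS.cube_lift_aux (Fintype.card N) N rfl f e he

theorem path_lift (f : C(I, B)) (e : E) (he : π e = f 0) :
    ∃ g : C(I, E), (∀ t, π (g t) = f t) ∧ g 0 = e := by
  set F : C((Empty → I) × I, B) := ⟨fun w => f w.2, f.continuous.comp continuous_snd⟩
  obtain ⟨Gc, h1, h2⟩ := hS.homotopy_lift F ⟨fun _ => e, continuous_const⟩ (fun u => he)
  refine ⟨⟨fun t => Gc ((fun x => x.elim), t),
    Gc.continuous.comp (continuous_const.prodMk continuous_id)⟩, fun t => ?_, ?_⟩
  · exact h1 ((fun x => x.elim), t)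
  · exact h2 (fun x => x.elim)

theorem square_lift (K : C(I × I, B)) (a : C(I, E)) (ha : ∀ s, π (a s) = K (s, 0)) :
    ∃ Gq : C(I × I, E), (∀ w, π (Gq w) = K w) ∧ ∀ s, Gq (s, 0) = a s := by
  set F : C((Unit → I) × I, B) := ⟨fun w => K (w.1 (), w.2),
    K.continuous.comp (((continuous_apply ()).comp continuous_fst).prodMk continuous_snd)⟩
  set g₀ : C(Unit → I, E) := ⟨fun u => a (u ()), a.continuous.comp (continuous_apply ())⟩
  obtain ⟨Gc, h1, h2⟩ := hS.homotopy_lift F g₀ (fun u => ha (u ()))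
  refine ⟨⟨fun w => Gc ((fun _ => w.1), w.2),
    Gc.continuous.comp ((continuous_pi fun _ => continuous_fst).prodMk continuous_snd)⟩,
    fun w => ?_, fun s => ?_⟩
  · exact h1 ((fun _ => w.1), w.2)
  · exact h2 (fun _ => s)
end CovSetup

section PathCast

attribute [local instance] Path.Homotopic.setoid

theorem path_homotopic_cast {X : Type*} [TopologicalSpace X] {x y x' y' : X}
    {p q : Path x y} (h : p.Homotopic q) (hx : x' = x) (hy : y' = y) :
    (p.cast hx hy).Homotopic (q.cast hx hy) := by
  subst hx; subst hy
  exact h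

end PathCast

namespace CovSetup

attribute [local instance] Path.Homotopic.setoid

open CategoryTheory

variable {Γ : Type u} [Group Γ] {E : Type u} [TopologicalSpace E] [MulAction Γ E]
  {B : Type u} [TopologicalSpace B]
variable {π : E → B} (hS : CovSetup π Γ)
include hS

/-- The fundamental group of the base of a wandering free quotient of a simply connected
space is the acting group. -/
theorem pi1_iso [PathConnectedSpace E] [SimplyConnectedSpace E] (e₀ : E) :
    Nonempty (FundamentalGroup B (π e₀) ≃* Γ) := by
  classical
  set b₀ := π e₀ with hb₀
  -- lifts of loops
  have hliftex : ∀ lp : Path b₀ b₀, ∃ g : C(I, E), (∀ t, π (g t) = lp t) ∧ g 0 = e₀ := by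
    intro lp
    apply hS.path_lift lp.toContinuousMap e₀
    show b₀ = lp 0
    rw [lp.source]
  choose lift hliftπ hlift0 using hliftex
  have hliftfib : ∀ lp : Path b₀ b₀, π (lift lp 1) = π e₀ := by
    intro lp
    rw [hliftπ lp 1, lp.target]
  have hendex : ∀ lp : Path b₀ b₀, ∃ γ : Γ, γ • e₀ = lift lp 1 := fun lp =>
    hS.exists_smul_eq_of_pi_eq (hliftfib lp)
  choose γend hγend using hendex
  -- uniqueness of the group element
  have hγuniq : ∀ (γ γ' : Γ), γ • e₀ = γ' • e₀ → γ = γ' := by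
    intro γ γ' h
    have h1 : (γ'⁻¹ * γ) • e₀ = e₀ := by rw [mul_smul, h, inv_smul_smul]
    exact (inv_mul_eq_one.mp (hS.free _ _ h1)).symm
  -- uniqueness of lifts
  have hliftuniq : ∀ (lp : Path b₀ b₀) (g : C(I, E)), (∀ t, π (g t) = lp t) → g 0 = e₀ →
      ∀ t, g t = lift lp t := by
    intro lp g hgπ hg0 t
    have := hS.lift_unique isPreconnected_univ g.continuous.continuousOn
      (lift lp).continuous.continuousOn (fun t _ => by rw [hgπ, hliftπ])
      (Set.mem_univ 0) (by rw [hg0, hlift0])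
    exact this (Set.mem_univ t)
  -- monodromy
  have hmono : ∀ lp₁ lp₂ : Path b₀ b₀, lp₁.Homotopic lp₂ → lift lp₁ 1 = lift lp₂ 1 := by
    rintro lp₁ lp₂ ⟨H⟩
    set K : C(I × I, B) := ⟨fun w => H (w.2, w.1),
      H.continuous.comp (continuous_snd.prodMk continuous_fst)⟩ with hK
    have hK0 : ∀ s, π (lift lp₁ s) = K (s, 0) := by
      intro s
      show _ = H (0, s)
      rw [ContinuousMap.HomotopyWith.apply_zero]
      exact hliftπ lp₁ s
    obtain ⟨Gq, hGqπ, hGq0⟩ := hS.square_lift K (lift lp₁) hK0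
    have h0S : (0 : I) ∈ ({0, 1} : Set I) := Set.mem_insert _ _
    have h1S : (1 : I) ∈ ({0, 1} : Set I) := Set.mem_insert_of_mem _ rfl
    -- left edge is constant
    have hle : ∀ t : I, Gq (0, t) = e₀ := by
      have hconst : ∀ t ∈ (Set.univ : Set I), π (Gq (0, t)) = b₀ := by
        intro t _
        rw [hGqπ (0, t)]
        show H (t, 0) = b₀
        rw [H.eq_fst t h0S]
        exact lp₁.source
      have hcont : ContinuousOn (fun t : I => Gq (0, t)) Set.univ :=
        (Gq.continuous.comp (continuous_const.prodMk continuous_id)).continuousOn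
      intro t
      have := hS.lift_const isPreconnected_univ hcont hconst (Set.mem_univ 0) t (Set.mem_univ t)
      rw [this, hGq0 0, hlift0]
    -- right edge is constant
    have hre : ∀ t : I, Gq (1, t) = lift lp₁ 1 := by
      have hconst : ∀ t ∈ (Set.univ : Set I), π (Gq (1, t)) = b₀ := by
        intro t _
        rw [hGqπ (1, t)]
        show H (t, 1) = b₀
        rw [H.eq_fst t h1S]
        exact lp₁.target
      have hcont : ContinuousOn (fun t : I => Gq (1, t)) Set.univ :=
        (Gq.continuous.comp (continuous_const.prodMk continuous_id)).continuousOn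
      intro t
      have := hS.lift_const isPreconnected_univ hcont hconst (Set.mem_univ 0) t (Set.mem_univ t)
      rw [this, hGq0 1]
    -- top edge is the lift of lp₂
    have htop : ∀ s : I, Gq (s, 1) = lift lp₂ s := by
      have hcm : Continuous (fun s : I => Gq (s, 1)) :=
        Gq.continuous.comp (continuous_id.prodMk continuous_const)
      have hπ : ∀ s : I, π (Gq (s, 1)) = lp₂ s := by
        intro s
        rw [hGqπ (s, 1)]
        show H (1, s) = lp₂ s
        rw [ContinuousMap.HomotopyWith.apply_one]
        rfl
      exact hliftuniq lp₂ ⟨fun s => Gq (s, 1), hcm⟩ hπ (hle 1)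
    rw [← htop 1, hre 1]
  -- the canonical paths and loops
  set P : ∀ γ : Γ, Path e₀ (γ • e₀) := fun γ => PathConnectedSpace.somePath e₀ (γ • e₀)
    with hP
  have hcastP : ∀ γ : Γ, b₀ = π (γ • e₀) := fun γ => (hS.pi_smul γ e₀).symm
  set lb : Γ → Path b₀ b₀ := fun γ => ((P γ).map hS.cont).cast rfl (hcastP γ) with hlb
  have hlbπ : ∀ (γ : Γ) (t : I), (lb γ) t = π (P γ t) := fun γ t => rfl
  have hlbend : ∀ γ : Γ, γend (lb γ) = γ := by
    intro γ
    apply hγuniq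
    rw [hγend (lb γ)]
    have hl := hliftuniq (lb γ) ⟨fun t => P γ t, (P γ).continuous⟩ (fun t => rfl) (P γ).source
    have h1 := (hl 1).symm
    show lift (lb γ) 1 = γ • e₀
    rw [h1]
    exact (P γ).target
  -- multiplicativity
  have hmul : ∀ lp₁ lp₂ : Path b₀ b₀, γend (lp₁.trans lp₂) = γend lp₁ * γend lp₂ := by
    intro lp₁ lp₂
    set A₁ : Path e₀ (γend lp₁ • e₀) :=
      { toContinuousMap := lift lp₁, source' := hlift0 lp₁, target' := (hγend lp₁).symm }
    set A₂ : Path e₀ (γend lp₂ • e₀) :=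
      { toContinuousMap := lift lp₂, source' := hlift0 lp₂, target' := (hγend lp₂).symm }
    set A₂' := A₂.map (hS.cont_smul (γend lp₁)) with hA₂'
    set A := A₁.trans A₂' with hA
    have hAπ : ∀ t, π (A t) = (lp₁.trans lp₂) t := by
      intro t
      rw [hA, Path.trans_apply, Path.trans_apply]
      split_ifs with h
      · exact hliftπ lp₁ _
      · show π (γend lp₁ • A₂ _) = lp₂ _
        rw [hS.pi_smul]
        exact hliftπ lp₂ _
    have hl := hliftuniq (lp₁.trans lp₂) ⟨fun t => A t, A.continuous⟩ hAπ A.source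
    apply hγuniq
    rw [hγend (lp₁.trans lp₂), ← hl 1]
    show A 1 = (γend lp₁ * γend lp₂) • e₀
    rw [A.target, mul_smul]
  -- every loop is homotopic to the canonical loop of its endpoint element
  have hquot : ∀ lp : Path b₀ b₀, lp.Homotopic (lb (γend lp)) := by
    intro lp
    set γ1 := γend lp with hγ1
    set A : Path e₀ (γ1 • e₀) :=
      { toContinuousMap := lift lp, source' := hlift0 lp, target' := (hγend lp).symm }
    have hhom : A.Homotopic (P γ1) := SimplyConnectedSpace.paths_homotopic _ _
    have hmap := Path.Homotopic.map hhom (⟨π, hS.cont⟩ : C(E, B))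
    have hcast := path_homotopic_cast hmap rfl (hcastP γ1)
    have hlp_eq : lp = (A.map hS.cont).cast rfl (hcastP γ1) :=
      Path.ext (funext fun t => (hliftπ lp t).symm)
    rw [hlp_eq]
    exact hcast
  -- descend to the quotient
  set Θq : Path.Homotopic.Quotient b₀ b₀ → Γ :=
    Quotient.lift γend (fun a b h => by
      apply hγuniq
      rw [hγend a, hγend b]
      exact hmono a b h) with hΘq
  set Φq : Γ → Path.Homotopic.Quotient b₀ b₀ := fun γ => ⟦lb γ⟧ with hΦq
  have hΘΦ : ∀ γ : Γ, Θq (Φq γ) = γ := fun γ => hlbend γ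
  have hΦΘ : ∀ q : Path.Homotopic.Quotient b₀ b₀, Φq (Θq q) = q := by
    refine Quotient.ind ?_
    intro lp
    show ⟦lb (γend lp)⟧ = ⟦lp⟧
    exact Quotient.sound (hquot lp).symm
  have hΘcomp : ∀ p q : Path.Homotopic.Quotient b₀ b₀,
      Θq (p.trans q) = Θq p * Θq q := by
    refine Quotient.ind₂ ?_
    intro a b
    show Θq ⟦a.trans b⟧ = _
    exact hmul a b
  -- assemble the isomorphism
  refine ⟨MulEquiv.mk' (Equiv.mk
    (fun a => (Θq (a : Path.Homotopic.Quotient b₀ b₀))⁻¹)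
    (fun γ => (Φq γ⁻¹ : FundamentalGroup B b₀))
    ?_ ?_) ?_⟩
  · intro a
    show Φq ((Θq a)⁻¹)⁻¹ = a
    rw [inv_inv]
    exact hΦΘ _
  · intro γ
    show (Θq (Φq γ⁻¹))⁻¹ = γ
    rw [hΘΦ, inv_inv]
  · intro a b
    show (Θq (Path.Homotopic.Quotient.trans b a))⁻¹ = (Θq a)⁻¹ * (Θq b)⁻¹
    rw [hΘcomp, mul_inv_rev]

end CovSetup

section Boundary

open unitInterval

theorem isPreconnected_cube_boundary {n : ℕ} (hn : 2 ≤ n) :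
    IsPreconnected (Cube.boundary (Fin n)) := by
  classical
  have hface : ∀ (i : Fin n) (c : I), IsPreconnected {y : Fin n → I | y i = c} := by
    intro i c
    have hcont : Continuous fun u : Fin n → I => Function.update u i c :=
      continuous_id.update i continuous_const
    have hrange : Set.range (fun u : Fin n → I => Function.update u i c) =
        {y : Fin n → I | y i = c} := by
      apply Set.Subset.antisymm
      · rintro _ ⟨u, rfl⟩
        exact Function.update_self i c u
      · intro y hy
        refine ⟨y, ?_⟩
        have : c = y i := hy.symm
        rw [this]
        exact Function.update_eq_self i y
    rw [← hrange]
    exact isPreconnected_range hcont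
  set i₀ : Fin n := ⟨0, by omega⟩ with hi₀
  set i₁ : Fin n := ⟨1, by omega⟩ with hi₁
  have hne : i₁ ≠ i₀ := by
    rw [hi₀, hi₁]
    simp [Fin.ext_iff]
  set A := ⋃ i : Fin n, {y : Fin n → I | y i = 0} with hA
  set Bs := ⋃ i : Fin n, {y : Fin n → I | y i = 1} with hBs
  have hApre : IsPreconnected A := by
    rw [hA, ← Set.sUnion_range]
    apply isPreconnected_sUnion (fun _ => (0:I))
    · rintro s ⟨i, rfl⟩
      exact rfl
    · rintro s ⟨i, rfl⟩
      exact hface i 0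
  have hBpre : IsPreconnected Bs := by
    rw [hBs, ← Set.sUnion_range]
    apply isPreconnected_sUnion (fun _ => (1:I))
    · rintro s ⟨i, rfl⟩
      exact rfl
    · rintro s ⟨i, rfl⟩
      exact hface i 1
  have hz : (fun i => if i = i₀ then (0:I) else 1) ∈ A ∩ Bs := by
    constructor
    · exact Set.mem_iUnion.mpr ⟨i₀, by simp⟩
    · exact Set.mem_iUnion.mpr ⟨i₁, by simp [hne]⟩
  have hAB := IsPreconnected.union _ hz.1 hz.2 hApre hBpre
  have hbd : Cube.boundary (Fin n) = A ∪ Bs := by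
    ext y
    simp only [Cube.boundary, Set.mem_setOf_eq, hA, hBs, Set.mem_union, Set.mem_iUnion]
    constructor
    · rintro ⟨i, h | h⟩
      · exact Or.inl ⟨i, h⟩
      · exact Or.inr ⟨i, h⟩
    · rintro (⟨i, h⟩ | ⟨i, h⟩)
      · exact ⟨i, Or.inl h⟩
      · exact ⟨i, Or.inr h⟩
  rw [hbd]
  exact hAB

end Boundary

namespace CovSetup

open unitInterval

variable {Γ : Type u} [Group Γ] {E : Type u} [TopologicalSpace E] [MulAction Γ E]
  {B : Type u} [TopologicalSpace B]
variable {π : E → B} (hS : CovSetup π Γ)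
include hS

theorem pin_subsingleton [ContractibleSpace E] (e₀ : E) {n : ℕ} (hn : 2 ≤ n) :
    Subsingleton (HomotopyGroup (Fin n) B (π e₀)) := by
  classical
  haveI hne : Nonempty (Fin n) := ⟨⟨0, by omega⟩⟩
  -- the sup-distance from the center
  set ℓ : (Fin n → I) → ℝ := fun u => ‖(fun i => 2*(u i : ℝ) - 1 : Fin n → ℝ)‖ with hℓ
  have hℓc : Continuous ℓ :=
    continuous_norm.comp (continuous_pi fun i =>
      (continuous_const.mul (continuous_subtype_val.comp (continuous_apply i))).sub
        continuous_const)
  have hcomp : ∀ (u : Fin n → I) (i : Fin n), |2*(u i : ℝ) - 1| ≤ ℓ u := by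
    intro u i
    have := norm_le_pi_norm (fun i => 2*(u i : ℝ) - 1 : Fin n → ℝ) i
    simpa [Real.norm_eq_abs] using this
  have hℓ0 : ∀ u, 0 ≤ ℓ u := fun u => norm_nonneg _
  have hℓ1 : ∀ u, ℓ u ≤ 1 := by
    intro u
    apply pi_norm_le_iff_of_nonneg zero_le_one |>.mpr
    intro i
    rw [Real.norm_eq_abs, abs_le]
    constructor <;> nlinarith [(u i).2.1, (u i).2.2]
  have hattain : ∀ u : Fin n → I, ∃ i, |2*(u i : ℝ) - 1| = ℓ u := by
    intro u
    obtain ⟨i, _, hi⟩ := Finset.exists_mem_eq_sup (Finset.univ : Finset (Fin n))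
      Finset.univ_nonempty (fun i => ‖(2*(u i : ℝ) - 1 : ℝ)‖₊)
    refine ⟨i, ?_⟩
    rw [hℓ]
    show |2*(u i : ℝ) - 1| = ‖(fun i => 2*(u i : ℝ) - 1 : Fin n → ℝ)‖
    rw [Pi.norm_def, hi]
    rw [← Real.norm_eq_abs, ← coe_nnnorm]
  have hbd_iff : ∀ u, u ∈ Cube.boundary (Fin n) ↔ ℓ u = 1 := by
    intro u
    constructor
    · rintro ⟨i, hi⟩
      apply le_antisymm (hℓ1 u)
      have h1 : |2*(u i : ℝ) - 1| = 1 := by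
        rcases hi with h | h <;> rw [h] <;> norm_num
      rw [← h1]
      exact hcomp u i
    · intro h
      obtain ⟨i, hi⟩ := hattain u
      rw [h] at hi
      rcases (abs_eq zero_le_one).mp hi with h2 | h2
      · refine ⟨i, Or.inr ?_⟩
        apply Subtype.ext
        show (u i : ℝ) = 1
        linarith
      · refine ⟨i, Or.inl ?_⟩
        apply Subtype.ext
        show (u i : ℝ) = 0
        linarith
  -- the coefficient `v`
  have hv01 : ∀ u, min 1 (2*(1 - ℓ u)) ∈ I := by
    intro u
    constructor
    · exact le_min zero_le_one (by nlinarith [hℓ1 u])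
    · exact min_le_left _ _
  set v : (Fin n → I) → I := fun u => ⟨min 1 (2*(1 - ℓ u)), hv01 u⟩ with hv
  have hvc : Continuous v := by
    rw [hv]
    exact Continuous.subtype_mk (continuous_const.min
      (continuous_const.mul (continuous_const.sub hℓc))) _
  have hvbd : ∀ u ∈ Cube.boundary (Fin n), v u = 0 := by
    intro u hu
    apply Subtype.ext
    show min 1 (2*(1 - ℓ u)) = 0
    rw [(hbd_iff u).mp hu]
    norm_num
  have hv1 : ∀ u, ℓ u ≤ 1/2 → v u = 1 := by
    intro u h
    apply Subtype.ext
    show min 1 (2*(1 - ℓ u)) = 1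
    rw [min_eq_left (by nlinarith)]
  -- the boundary-pushing reparametrization `σ`
  have hden : ∀ (u : Fin n → I) (s : I), (1:ℝ)/2 ≤ max (ℓ u) (1 - (s:ℝ)/2) := by
    intro u s
    refine le_trans ?_ (le_max_right _ _)
    nlinarith [s.2.2]
  have hσ01 : ∀ (u : Fin n → I) (s : I) (i : Fin n),
      1/2 + ((u i : ℝ) - 1/2)/max (ℓ u) (1 - (s:ℝ)/2) ∈ I := by
    intro u s i
    have hr := hden u s
    set r := max (ℓ u) (1 - (s:ℝ)/2) with hrdef
    have hrpos : (0:ℝ) < r := by linarith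
    have h2 : |(u i : ℝ) - 1/2| ≤ r/2 := by
      have h1 : 2*(u i:ℝ) - 1 = 2*((u i:ℝ) - 1/2) := by ring
      have h3 := hcomp u i
      rw [h1, abs_mul, abs_of_nonneg (by norm_num : (0:ℝ) ≤ 2)] at h3
      have h4 : ℓ u ≤ r := le_max_left _ _
      linarith
    have h5 : |((u i : ℝ) - 1/2)/r| ≤ 1/2 := by
      rw [abs_div, abs_of_pos hrpos, div_le_iff₀ hrpos]
      linarith
    have h6 := abs_le.mp h5
    constructor
    · linarith [h6.1]
    · linarith [h6.2]
  set σm : (Fin n → I) × I → (Fin n → I) := fun w i =>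
    ⟨1/2 + ((w.1 i : ℝ) - 1/2)/max (ℓ w.1) (1 - (w.2:ℝ)/2), hσ01 w.1 w.2 i⟩ with hσm
  have hσc : Continuous σm := by
    apply continuous_pi
    intro i
    apply Continuous.subtype_mk
    apply continuous_const.add
    apply Continuous.div
    · exact (continuous_subtype_val.comp ((continuous_apply i).comp continuous_fst)).sub
        continuous_const
    · exact (hℓc.comp continuous_fst).max
        (continuous_const.sub ((continuous_subtype_val.comp continuous_snd).div_const 2))
    · intro w
      have := hden w.1 w.2
      intro hzero
      rw [hzero] at this
      linarith
  have hσ0 : ∀ u, σm (u, (0:I)) = u := by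
    intro u
    funext i
    apply Subtype.ext
    show 1/2 + ((u i : ℝ) - 1/2)/max (ℓ u) (1 - ((0:I):ℝ)/2) = (u i : ℝ)
    have h0 : ((0:I):ℝ) = 0 := rfl
    rw [h0]
    have : max (ℓ u) (1 - (0:ℝ)/2) = 1 := by
      rw [show (1 - (0:ℝ)/2) = 1 by norm_num]
      exact max_eq_right (hℓ1 u)
    rw [this, div_one]
    ring
  have hσbd : ∀ u ∈ Cube.boundary (Fin n), ∀ s : I, σm (u, s) = u := by
    intro u hu s
    have hl1 := (hbd_iff u).mp hu
    funext i
    apply Subtype.ext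
    show 1/2 + ((u i : ℝ) - 1/2)/max (ℓ u) (1 - (s:ℝ)/2) = (u i : ℝ)
    have : max (ℓ u) (1 - (s:ℝ)/2) = 1 := by
      rw [hl1]
      apply max_eq_left
      nlinarith [s.2.1]
    rw [this, div_one]
    ring
  have hσ1 : ∀ u : Fin n → I, 1/2 ≤ ℓ u → σm (u, (1:I)) ∈ Cube.boundary (Fin n) := by
    intro u h
    obtain ⟨i, hi⟩ := hattain u
    have hℓpos : (0:ℝ) < ℓ u := by linarith
    have hne0 : ℓ u ≠ 0 := ne_of_gt hℓpos
    have hmax : max (ℓ u) (1 - ((1:I):ℝ)/2) = ℓ u := by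
      apply max_eq_left
      have h1 : ((1:I):ℝ) = 1 := rfl
      rw [h1]
      linarith
    have hcoe : (σm (u, (1:I)) i : ℝ) = 1/2 + ((u i:ℝ) - 1/2)/ℓ u := by
      show 1/2 + ((u i : ℝ) - 1/2)/max (ℓ u) (1 - ((1:I):ℝ)/2) = _
      rw [hmax]
    rcases (abs_eq (le_of_lt hℓpos)).mp hi with h2 | h2
    · refine ⟨i, Or.inr ?_⟩
      apply Subtype.ext
      show (σm (u, (1:I)) i : ℝ) = 1
      rw [hcoe]
      have h3 : (u i:ℝ) - 1/2 = ℓ u / 2 := by linarith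
      rw [h3]
      field_simp
      ring
    · refine ⟨i, Or.inl ?_⟩
      apply Subtype.ext
      show (σm (u, (1:I)) i : ℝ) = 0
      rw [hcoe]
      have h3 : (u i:ℝ) - 1/2 = -(ℓ u) / 2 := by linarith
      rw [h3]
      field_simp
      ring
  -- multiplication in the interval
  have hmul01 : ∀ a b : I, (a:ℝ)*(b:ℝ) ∈ I := by
    intro a b
    constructor
    · exact mul_nonneg a.2.1 b.2.1
    · nlinarith [a.2.1, a.2.2, b.2.1, b.2.2]
  set mulI : I → I → I := fun a b => ⟨(a:ℝ)*(b:ℝ), hmul01 a b⟩ with hmulI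
  -- the contraction of E
  obtain ⟨c, hKn⟩ := id_nullhomotopic E
  obtain ⟨K⟩ := hKn
  -- the key: every generalized loop is homotopic to the constant one
  have hkey : ∀ f : ↥(GenLoop (Fin n) B (π e₀)),
      GenLoop.Homotopic f (GenLoop.const : ↥(GenLoop (Fin n) B (π e₀))) := by
    intro f
    have hcornerB : (fun _ => (0:I)) ∈ Cube.boundary (Fin n) := ⟨⟨0, by omega⟩, Or.inl rfl⟩
    have hfc : π e₀ = f.1 (fun _ => 0) := (f.2 _ hcornerB).symm
    obtain ⟨g, hgπ, hgc⟩ := hS.cube_lift f.1 e₀ hfc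
    have hgb : ∀ u ∈ Cube.boundary (Fin n), g u = e₀ := by
      intro u hu
      have h1 := hS.lift_const (isPreconnected_cube_boundary hn)
        g.continuous.continuousOn (b := π e₀)
        (fun a ha => by rw [hgπ]; exact f.2 a ha) hcornerB u hu
      rw [h1, hgc]
    set gvc : C(Fin n → I, B) := ⟨fun u => π (K (v u, e₀)),
      hS.cont.comp (K.continuous.comp (hvc.prodMk continuous_const))⟩ with hgvc
    -- stage 1
    have hH1cont : Continuous fun p : I × (Fin n → I) =>
        π (K (mulI p.1 (v p.2), g (σm (p.2, p.1)))) := by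
      apply hS.cont.comp
      apply K.continuous.comp
      apply Continuous.prodMk
      · exact Continuous.subtype_mk ((continuous_subtype_val.comp continuous_fst).mul
          (continuous_subtype_val.comp (hvc.comp continuous_snd))) _
      · exact g.continuous.comp (hσc.comp (continuous_snd.prodMk continuous_fst))
    have hH1 : ContinuousMap.HomotopyRel f.1 gvc (Cube.boundary (Fin n)) :=
      { toHomotopy :=
        { toContinuousMap := ⟨fun p => π (K (mulI p.1 (v p.2), g (σm (p.2, p.1)))), hH1cont⟩
          map_zero_left := by
            intro u
            show π (K (mulI 0 (v u), g (σm (u, (0:I))))) = f.1 u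
            have h1 : mulI 0 (v u) = 0 := Subtype.ext (zero_mul _)
            rw [h1, hσ0 u, K.apply_zero, ContinuousMap.id_apply, hgπ]
          map_one_left := by
            intro u
            show π (K (mulI 1 (v u), g (σm (u, (1:I))))) = gvc u
            have h1 : mulI 1 (v u) = v u := Subtype.ext (one_mul _)
            rw [h1]
            show π (K (v u, g (σm (u, (1:I))))) = π (K (v u, e₀))
            rcases le_total (ℓ u) (1/2) with hc | hc
            · rw [hv1 u hc, K.apply_one, K.apply_one]
              rfl
            · rw [hgb _ (hσ1 u hc)] }
        prop' := by
          intro t u hu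
          show π (K (mulI t (v u), g (σm (u, t)))) = f.1 u
          rw [hvbd u hu, hσbd u hu t]
          have h1 : mulI t 0 = 0 := Subtype.ext (mul_zero _)
          rw [h1, K.apply_zero, ContinuousMap.id_apply, hgπ] }
    -- stage 2
    have hH2cont : Continuous fun p : I × (Fin n → I) =>
        π (K (mulI (unitInterval.symm p.1) (v p.2), e₀)) := by
      apply hS.cont.comp
      apply K.continuous.comp
      apply Continuous.prodMk
      · exact Continuous.subtype_mk
          ((continuous_subtype_val.comp (unitInterval.continuous_symm.comp continuous_fst)).mul
            (continuous_subtype_val.comp (hvc.comp continuous_snd))) _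
      · exact continuous_const
    have hH2 : ContinuousMap.HomotopyRel gvc
        ((GenLoop.const : ↥(GenLoop (Fin n) B (π e₀))) : C(Fin n → I, B))
        (Cube.boundary (Fin n)) :=
      { toHomotopy :=
        { toContinuousMap :=
            ⟨fun p => π (K (mulI (unitInterval.symm p.1) (v p.2), e₀)), hH2cont⟩
          map_zero_left := by
            intro u
            show π (K (mulI (unitInterval.symm 0) (v u), e₀)) = gvc u
            have h1 : mulI (unitInterval.symm 0) (v u) = v u := by
              apply Subtype.ext
              show ((unitInterval.symm 0 : I):ℝ) * _ = _
              rw [unitInterval.symm_zero]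
              exact one_mul _
            rw [h1]
            rfl
          map_one_left := by
            intro u
            show π (K (mulI (unitInterval.symm 1) (v u), e₀)) = _
            have h1 : mulI (unitInterval.symm 1) (v u) = 0 := by
              apply Subtype.ext
              show ((unitInterval.symm 1 : I):ℝ) * _ = _
              rw [unitInterval.symm_one]
              exact zero_mul _
            rw [h1, K.apply_zero, ContinuousMap.id_apply]
            rfl }
        prop' := by
          intro t u hu
          show π (K (mulI (unitInterval.symm t) (v u), e₀)) = gvc u
          show π (K (mulI (unitInterval.symm t) (v u), e₀)) = π (K (v u, e₀))
          rw [hvbd u hu]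
          have h1 : mulI (unitInterval.symm t) 0 = 0 := Subtype.ext (mul_zero _)
          rw [h1] }
    exact ⟨hH1.trans hH2⟩
  constructor
  intro q₁ q₂
  induction q₁ using Quotient.inductionOn with
  | h f =>
  induction q₂ using Quotient.inductionOn with
  | h f' =>
  exact Quotient.sound ((hkey f).trans ((hkey f').symm))

end CovSetup

theorem fiber_of_borel_projection_is_KG1
    {G : Type u} [Group G] {X E : Type u} [TopologicalSpace X] [TopologicalSpace E]
    [MulAction G X] [MulAction G E]
    -- the (discrete) group `G` acts continuously on `X` and `E`
    (hX : ∀ g : G, Continuous fun a : X => g • a)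
    (hE : ∀ g : G, Continuous fun e : E => g • e)
    -- `X` is locally compact Hausdorff
    [LocallyCompactSpace X] [T2Space X]
    -- the action of `G` on `X` is properly discontinuous
    (hpd : ∀ K L : Set X, IsCompact K → IsCompact L →
      {g : G | (g • K) ∩ L ≠ ∅}.Finite)
    -- the action of `G` on `E` is free
    (hfree : ∀ (g : G) (e : E), g • e = e → g = 1)
    -- `E` is contractible, path-connected and locally path-connected
    [ContractibleSpace E] [PathConnectedSpace E] [LocallyPathConnectedSpace E]
    -- every point of `E` has a neighborhood disjoint from its translates
    (hwander : ∀ e : E, ∃ V : Set E, IsOpen V ∧ e ∈ V ∧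
      ∀ g : G, g ≠ 1 → (g • V) ∩ V = ∅)
    -- `p : (X × E)/G → X/G` is induced by the projection `X × E → X`
    (p : Quotient (MulAction.orbitRel G (X × E)) → Quotient (MulAction.orbitRel G X))
    (hp : Continuous p)
    (hp' : ∀ z : X × E, p (Quotient.mk _ z) = Quotient.mk _ z.1)
    (x : X) :
    ∀ y : (p ⁻¹' {Quotient.mk _ x} : Set (Quotient (MulAction.orbitRel G (X × E)))),
      Nonempty (FundamentalGroup
          (p ⁻¹' {Quotient.mk _ x} : Set (Quotient (MulAction.orbitRel G (X × E)))) y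
        ≃* MulAction.stabilizer G x) ∧
      ∀ n : ℕ, 2 ≤ n →
        Subsingleton (HomotopyGroup (Fin n)
          (p ⁻¹' {Quotient.mk _ x} : Set (Quotient (MulAction.orbitRel G (X × E)))) y) := by
  classical
  haveI : ContinuousConstSMul G X := ⟨hX⟩
  haveI : ContinuousConstSMul G E := ⟨hE⟩
  set H := MulAction.stabilizer G x with hH
  set Fs : Set (Quotient (MulAction.orbitRel G (X × E))) := p ⁻¹' {Quotient.mk _ x} with hFs
  have hψmem : ∀ e : E, Quotient.mk (MulAction.orbitRel G (X × E)) (x, e) ∈ Fs := by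
    intro e
    have h1 : p (Quotient.mk _ (x, e)) = Quotient.mk _ x := hp' (x, e)
    show Quotient.mk _ (x, e) ∈ p ⁻¹' {Quotient.mk _ x}
    rw [Set.mem_preimage, h1]
    exact Set.mem_singleton _
  set ψ : E → ↥Fs := fun e => ⟨Quotient.mk _ (x, e), hψmem e⟩ with hψ
  have hψc : Continuous ψ := by
    apply Continuous.subtype_mk
    exact continuous_quot_mk.comp (continuous_const.prodMk continuous_id)
  -- surjectivity of ψ
  have hsurj : ∀ b : ↥Fs, ∃ e : E, ψ e = b := by
    intro b
    obtain ⟨z, hz⟩ := Quotient.exists_rep b.1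
    have hb : p b.1 ∈ ({Quotient.mk _ x} : Set (Quotient (MulAction.orbitRel G X))) := b.2
    rw [← hz, hp' z] at hb
    have hrel : z.1 ∈ MulAction.orbit G x := Quotient.exact (Set.mem_singleton_iff.mp hb)
    obtain ⟨g, hg⟩ := hrel
    refine ⟨g⁻¹ • z.2, ?_⟩
    apply Subtype.ext
    show Quotient.mk _ (x, g⁻¹ • z.2) = b.1
    rw [← hz]
    apply Quotient.sound
    show (x, g⁻¹ • z.2) ∈ MulAction.orbit G z
    refine ⟨g⁻¹, ?_⟩
    show g⁻¹ • z = (x, g⁻¹ • z.2)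
    have h1 : g⁻¹ • z = (g⁻¹ • z.1, g⁻¹ • z.2) := rfl
    have hg' : g • x = z.1 := hg
    rw [h1, ← hg', inv_smul_smul]
  -- fibers of ψ are the H-orbits
  have hfib : ∀ e e' : E, ψ e = ψ e' ↔ e ∈ MulAction.orbit H e' := by
    intro e e'
    constructor
    · intro h
      have h1 : Quotient.mk (MulAction.orbitRel G (X × E)) (x, e) = Quotient.mk _ (x, e') :=
        congrArg Subtype.val h
      have h2 : (x, e) ∈ MulAction.orbit G (x, e') := Quotient.exact h1
      obtain ⟨g, hg⟩ := h2
      have hg' : g • (x, e') = (x, e) := hg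
      have hgx : g • x = x := congrArg Prod.fst hg'
      have hge : g • e' = e := congrArg Prod.snd hg'
      exact ⟨⟨g, hgx⟩, hge⟩
    · rintro ⟨h, hh⟩
      apply Subtype.ext
      apply Quotient.sound
      show (x, e) ∈ MulAction.orbit G (x, e')
      refine ⟨(h : G), ?_⟩
      show (h : G) • (x, e') = (x, e)
      have h1 : (h : G) • (x, e') = ((h : G) • x, (h : G) • e') := rfl
      rw [h1, MulAction.mem_stabilizer_iff.mp h.2]
      have hh' : (h : G) • e' = e := hh
      rw [hh']
  -- ψ is an open map
  have hopenψ : IsOpenMap ψ := by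
    obtain ⟨Kc, hKcomp, hKnhds⟩ := exists_compact_mem_nhds x
    set S : Set G := {g : G | g • x ∈ Kc} with hSdef
    have hSfin : S.Finite := by
      have h1 := hpd {x} Kc isCompact_singleton hKcomp
      apply Set.Finite.subset h1
      intro g hg
      show (g • {x}) ∩ Kc ≠ ∅
      rw [Set.smul_set_singleton]
      intro hemp
      have hmem : g • x ∈ ({g • x} : Set X) ∩ Kc := ⟨rfl, hg⟩
      rw [hemp] at hmem
      exact hmem
    have hsep : ∀ g : G, ∃ A : Set X, IsOpen A ∧ x ∈ A ∧ (g • x ≠ x → g • x ∉ A) := by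
      intro g
      by_cases hg : g • x = x
      · exact ⟨Set.univ, isOpen_univ, Set.mem_univ x, fun hcon => absurd hg hcon⟩
      · obtain ⟨Au, Bu, hAo, _, hxA, hgB, hdisj⟩ := t2_separation (Ne.symm hg)
        exact ⟨Au, hAo, hxA, fun _ hmem => (Set.disjoint_left.mp hdisj hmem) hgB⟩
    choose Ag hAgo hAgx hAgn using hsep
    set A : Set X := interior Kc ∩ ⋂ g ∈ S, Ag g with hAdef
    have hAopen : IsOpen A := isOpen_interior.inter (hSfin.isOpen_biInter fun g _ => hAgo g)
    have hAx : x ∈ A :=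
      ⟨mem_interior_iff_mem_nhds.mpr hKnhds, Set.mem_iInter₂.mpr fun g _ => hAgx g⟩
    have hAorb : ∀ g : G, g • x ∈ A → g • x = x := by
      intro g hgA
      by_contra hne
      have h1 : g ∈ S := by
        show g • x ∈ Kc
        exact interior_subset hgA.1
      have h2 : g • x ∈ Ag g := Set.mem_iInter₂.mp hgA.2 g h1
      exact hAgn g hne h2
    intro U hU
    have hO : IsOpen (Quotient.mk (MulAction.orbitRel G (X × E)) '' (A ×ˢ U)) :=
      (MulAction.isOpenQuotientMap_quotientMk).isOpenMap _ (hAopen.prod hU)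
    have himg : ψ '' U = Subtype.val ⁻¹' (Quotient.mk (MulAction.orbitRel G (X × E)) ''
        (A ×ˢ U)) := by
      ext b
      constructor
      · rintro ⟨e, heU, rfl⟩
        exact ⟨(x, e), ⟨hAx, heU⟩, rfl⟩
      · rintro ⟨⟨a, e⟩, ⟨haA, heU⟩, hval⟩
        have hb : p b.1 ∈ ({Quotient.mk _ x} : Set (Quotient (MulAction.orbitRel G X))) := b.2
        rw [← hval, hp'] at hb
        have hrel : (a, e).1 ∈ MulAction.orbit G x :=
          Quotient.exact (Set.mem_singleton_iff.mp hb)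
        obtain ⟨g, hg⟩ := hrel
        have hg' : g • x = a := hg
        have hax : a = x := by
          rw [← hg']
          exact hAorb g (by rw [hg']; exact haA)
        refine ⟨e, heU, ?_⟩
        apply Subtype.ext
        show (ψ e).1 = b.1
        rw [← hval]
        show Quotient.mk _ (x, e) = Quotient.mk _ (a, e)
        rw [hax]
    rw [himg]
    exact hO.preimage continuous_subtype_val
  -- the covering setup
  have hSmain : CovSetup ψ ↥H :=
    { cont_smul := fun h => hE (h : G)
      free := fun h e hhe => Subtype.ext (hfree (h : G) e hhe)
      wander := by
        intro e
        obtain ⟨V, hVo, heV, hw⟩ := hwander e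
        refine ⟨V, hVo, heV, ?_⟩
        intro h hne
        exact hw (h : G) (fun h1 => hne (Subtype.ext h1))
      cont := hψc
      isOpenMap := hopenψ
      surj := fun b => hsurj b
      fib := hfib }
  intro y
  obtain ⟨e₀, he₀⟩ := hsurj y
  constructor
  · have h1 := hSmain.pi1_iso e₀
    rw [he₀] at h1
    exact h1
  · intro n hn
    have h2 := hSmain.pin_subsingleton e₀ hn
    rw [he₀] at h2
    exact h2
end
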